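/- arXiv:1302.2349 — 5 statements merged into one kernel-verified Lean document; each statement's English description precedes it below -/
import Mathlib

section
/- Let X ⊂ E_x and Y ⊂ E_y be nonempty closed bounded convex subsets of Euclidean spaces, A: E_y → E_x a linear map, a ∈ E_x, and ψ a Lipschitz continuous convex function on Y with a subgradient selection ψ'(y) ∈ ∂ψ(y). Define f_*(x) = min_{y∈Y}[⟨x, Ay + a⟩ + ψ(y)], f(y) = max_{x∈X}[⟨x, Ay + a⟩ + ψ(y)], Opt(P) = max_{x∈X} f_*(x), Opt(D) = min_{y∈Y} f(y), so that Opt(P) = Opt(D). Given points y_1, ..., y_t ∈ Y, points x_τ ∈ Argmax_{x∈X}⟨x, Ay_τ + a⟩, vectors f'(y_τ) = A^T x_τ + ψ'(y_τ), and weights λ_1, ..., λ_t ≥ 0 with Σ_{τ=1}^t λ_τ = 1, set x̂ = Σ_{τ=1}^t λ_τ x_τ and ŷ = Σ_{τ=1}^t λ_τ y_τ. Then x̂ ∈ X, ŷ ∈ Y and [f(ŷ) − Opt(D)] + [Opt(P) − f_*(x̂)] = f(ŷ) − f_*(x̂) ≤ max_{y∈Y} Σ_{τ=1}^t λ_τ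 ⟨f'(y_τ), y_τ − y⟩. -/
open RealInnerProductSpace

section Aux

variable {Ex Ey : Type*} [NormedAddCommGroup Ex] [InnerProductSpace ℝ Ex]
  [NormedAddCommGroup Ey] [InnerProductSpace ℝ Ey] [FiniteDimensional ℝ Ey]

/-- Kneser-style two-point lemma. -/
private lemma aux_pair (A : Ey →ₗ[ℝ] Ex) (a : Ex) (ψ : Ey → ℝ) (Y : Set Ey)
    (hYcv : Convex ℝ Y) (hψcv : ConvexOn ℝ Y ψ) (hψc : ContinuousOn ψ Y)
    (X' : Set Ex) (hcp : IsCompact X') (hcv : Convex ℝ X') (c : ℝ)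
    (hsup : ∀ y ∈ Y, ∀ c' < c, ∃ u ∈ X', c' ≤ ⟪u, A y + a⟫ + ψ y)
    {y1 y2 : Ey} (hy1 : y1 ∈ Y) (hy2 : y2 ∈ Y) {c' : ℝ} (hc' : c' < c) :
    ∃ u ∈ X', c' ≤ ⟪u, A y1 + a⟫ + ψ y1 ∧ c' ≤ ⟪u, A y2 + a⟫ + ψ y2 := by
  by_contra hcon
  push_neg at hcon
  have hmin : ∀ u ∈ X', ⟪u, A y1 + a⟫ + ψ y1 < c' ∨ ⟪u, A y2 + a⟫ + ψ y2 < c' := by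
    intro u hu
    rcases lt_or_ge (⟪u, A y1 + a⟫ + ψ y1) c' with h | h
    · exact Or.inl h
    · exact Or.inr (hcon u hu h)
  set c'' : ℝ := (c' + c) / 2 with hc''def
  have hc'c'' : c' < c'' := by rw [hc''def]; linarith
  have hc''c : c'' < c := by rw [hc''def]; linarith
  set yt : ℝ → Ey := fun t => (1 - t) • y1 + t • y2 with hytdef
  have hytY : ∀ t ∈ Set.Icc (0:ℝ) 1, yt t ∈ Y := by
    intro t ht
    exact hYcv hy1 hy2 (by linarith [ht.2]) ht.1 (by ring)
  have hA : Continuous A := A.continuous_of_finiteDimensional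
  have hyt : Continuous yt := by
    apply Continuous.add
    · exact (continuous_const.sub continuous_id).smul continuous_const
    · exact continuous_id.smul continuous_const
  -- convexity of g in y along the segment
  have hgcv : ∀ (u : Ex), ∀ t ∈ Set.Icc (0:ℝ) 1,
      ⟪u, A (yt t) + a⟫ + ψ (yt t) ≤
        (1 - t) * (⟪u, A y1 + a⟫ + ψ y1) + t * (⟪u, A y2 + a⟫ + ψ y2) := by
    intro u t ht
    have h1 : ψ (yt t) ≤ (1 - t) * ψ y1 + t * ψ y2 :=
      hψcv.2 hy1 hy2 (by linarith [ht.2]) ht.1 (by ring)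
    have h2 : ⟪u, A (yt t) + a⟫ = (1 - t) * ⟪u, A y1 + a⟫ + t * ⟪u, A y2 + a⟫ := by
      have hv : A (yt t) + a = (1 - t) • (A y1 + a) + t • (A y2 + a) := by
        rw [hytdef]
        simp only [map_add, map_smul]
        module
      rw [hv, inner_add_right, real_inner_smul_right, real_inner_smul_right]
    linarith
  -- affineness of g in x
  have hgaff : ∀ (u u' : Ex) (s : ℝ) (v : Ey),
      ⟪(1 - s) • u + s • u', A v + a⟫ + ψ v =
        (1 - s) * (⟪u, A v + a⟫ + ψ v) + s * (⟪u', A v + a⟫ + ψ v) := by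
    intro u u' s v
    rw [inner_add_left, real_inner_smul_left, real_inner_smul_left]; ring
  set SA : Set Ex := X' ∩ {u | c'' ≤ ⟪u, A y1 + a⟫ + ψ y1} with hSAdef
  set SB : Set Ex := X' ∩ {u | c'' ≤ ⟪u, A y2 + a⟫ + ψ y2} with hSBdef
  have hclA : IsClosed {u : Ex | c'' ≤ ⟪u, A y1 + a⟫ + ψ y1} :=
    isClosed_le continuous_const ((continuous_id.inner continuous_const).add continuous_const)
  have hclB : IsClosed {u : Ex | c'' ≤ ⟪u, A y2 + a⟫ + ψ y2} :=
    isClosed_le continuous_const ((continuous_id.inner continuous_const).add continuous_const)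
  have hcpA : IsCompact SA := hcp.inter_right hclA
  have hcpB : IsCompact SB := hcp.inter_right hclB
  set G : ℝ × Ex → ℝ := fun p => ⟪p.2, A (yt p.1) + a⟫ + ψ (yt p.1) with hGdef
  have hGc : ContinuousOn G (Set.Icc (0:ℝ) 1 ×ˢ (Set.univ : Set Ex)) := by
    apply ContinuousOn.add
    · exact (continuous_snd.inner
        ((hA.comp (hyt.comp continuous_fst)).add continuous_const)).continuousOn
    · exact hψc.comp ((hyt.comp continuous_fst).continuousOn) (fun p hp => hytY _ hp.1)
  set T1 : Set ℝ := {t ∈ Set.Icc (0:ℝ) 1 | ∃ u ∈ SA, c'' ≤ G (t, u)} with hT1def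
  set T2 : Set ℝ := {t ∈ Set.Icc (0:ℝ) 1 | ∃ u ∈ SB, c'' ≤ G (t, u)} with hT2def
  have hTclosed : ∀ (S : Set Ex), IsCompact S →
      IsClosed {t ∈ Set.Icc (0:ℝ) 1 | ∃ u ∈ S, c'' ≤ G (t, u)} := by
    intro S hS
    have hP : IsClosed ((Set.Icc (0:ℝ) 1 ×ˢ S) ∩ G ⁻¹' Set.Ici c'') := by
      apply ContinuousOn.preimage_isClosed_of_isClosed
      · exact hGc.mono (Set.prod_mono le_rfl (Set.subset_univ S))
      · exact isClosed_Icc.prod hS.isClosed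
      · exact isClosed_Ici
    have hPcp : IsCompact ((Set.Icc (0:ℝ) 1 ×ˢ S) ∩ G ⁻¹' Set.Ici c'') :=
      (isCompact_Icc.prod hS).of_isClosed_subset hP Set.inter_subset_left
    have heq : {t ∈ Set.Icc (0:ℝ) 1 | ∃ u ∈ S, c'' ≤ G (t, u)} =
        Prod.fst '' ((Set.Icc (0:ℝ) 1 ×ˢ S) ∩ G ⁻¹' Set.Ici c'') := by
      ext t
      constructor
      · rintro ⟨ht, u, huS, hug⟩
        exact ⟨(t, u), ⟨⟨ht, huS⟩, hug⟩, rfl⟩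
      · rintro ⟨⟨t', u⟩, ⟨⟨ht, huS⟩, hug⟩, rfl⟩
        exact ⟨ht, u, huS, hug⟩
    rw [heq]
    exact (hPcp.image continuous_fst).isClosed
  have hT1cl : IsClosed T1 := hTclosed SA hcpA
  have hT2cl : IsClosed T2 := hTclosed SB hcpB
  have hcover : Set.Icc (0:ℝ) 1 ⊆ T1 ∪ T2 := by
    intro t ht
    obtain ⟨u, huX, hug⟩ := hsup (yt t) (hytY t ht) c'' hc''c
    have hor : c'' ≤ ⟪u, A y1 + a⟫ + ψ y1 ∨ c'' ≤ ⟪u, A y2 + a⟫ + ψ y2 := by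
      by_contra hno
      push_neg at hno
      have hle := hgcv u t ht
      have p3 : (1 - t) * c'' + t * c'' = c'' := by ring
      rcases lt_or_eq_of_le ht.1 with htpos | hteq
      · have p1 : (1 - t) * (⟪u, A y1 + a⟫ + ψ y1) ≤ (1 - t) * c'' :=
          mul_le_mul_of_nonneg_left hno.1.le (by linarith [ht.2])
        have p2 : t * (⟪u, A y2 + a⟫ + ψ y2) < t * c'' :=
          mul_lt_mul_of_pos_left hno.2 htpos
        linarith
      · rw [← hteq] at hle hug
        norm_num at hle
        linarith [hno.1]
    rcases hor with h | h
    · exact Or.inl ⟨ht, u, ⟨huX, h⟩, hug⟩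
    · exact Or.inr ⟨ht, u, ⟨huX, h⟩, hug⟩
  have h0T1 : (0:ℝ) ∈ T1 := by
    obtain ⟨u, huX, hug⟩ := hsup y1 hy1 c'' hc''c
    have hy0 : yt 0 = y1 := by rw [hytdef]; simp
    refine ⟨Set.mem_Icc.mpr ⟨le_rfl, zero_le_one⟩, u, ⟨huX, hug⟩, ?_⟩
    rw [hGdef]; simp only [hy0]; exact hug
  have h1T2 : (1:ℝ) ∈ T2 := by
    obtain ⟨u, huX, hug⟩ := hsup y2 hy2 c'' hc''c
    have hy1' : yt 1 = y2 := by rw [hytdef]; simp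
    refine ⟨Set.mem_Icc.mpr ⟨zero_le_one, le_rfl⟩, u, ⟨huX, hug⟩, ?_⟩
    rw [hGdef]; simp only [hy1']; exact hug
  obtain ⟨t, htmem⟩ := isPreconnected_closed_iff.mp isPreconnected_Icc T1 T2 hT1cl hT2cl hcover
    ⟨0, Set.mem_Icc.mpr ⟨le_rfl, zero_le_one⟩, h0T1⟩
    ⟨1, Set.mem_Icc.mpr ⟨zero_le_one, le_rfl⟩, h1T2⟩
  obtain ⟨htI, ht1, ht2⟩ := htmem
  obtain ⟨htI1, u, ⟨huX, ha1⟩, hug⟩ := ht1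
  obtain ⟨htI2, u', ⟨hu'X, hb2⟩, hu'g⟩ := ht2
  have ha1le : c'' ≤ ⟪u, A y1 + a⟫ + ψ y1 := ha1
  have hb2le : c'' ≤ ⟪u', A y2 + a⟫ + ψ y2 := hb2
  -- abbreviations
  set a1 : ℝ := ⟪u, A y1 + a⟫ + ψ y1 with ha1def
  set a2 : ℝ := ⟪u, A y2 + a⟫ + ψ y2 with ha2def
  set b1 : ℝ := ⟪u', A y1 + a⟫ + ψ y1 with hb1def
  set b2 : ℝ := ⟪u', A y2 + a⟫ + ψ y2 with hb2def
  have ha2lt : a2 < c' := by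
    rcases hmin u huX with h | h
    · exact absurd h (not_lt.mpr (le_trans (le_of_lt hc'c'') ha1le))
    · exact h
  have hb1lt : b1 < c' := by
    rcases hmin u' hu'X with h | h
    · exact h
    · exact absurd h (not_lt.mpr (le_trans (le_of_lt hc'c'') hb2le))
  have hd : (0:ℝ) < (a1 - a2) + (b2 - b1) := by linarith
  set s : ℝ := (a1 - a2) / ((a1 - a2) + (b2 - b1)) with hsdef
  have hs0 : 0 ≤ s := div_nonneg (by linarith) (le_of_lt hd)
  have hs1 : s ≤ 1 := by
    rw [hsdef, div_le_one hd]; linarith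
  have hsd : s * ((a1 - a2) + (b2 - b1)) = a1 - a2 := by
    rw [hsdef]; field_simp
  set us : Ex := (1 - s) • u + s • u' with husdef
  have husX : us ∈ X' := hcv huX hu'X (by linarith) hs0 (by ring)
  have hseg1 : ⟪us, A y1 + a⟫ + ψ y1 = (1 - s) * a1 + s * b1 := hgaff u u' s y1
  have hseg2 : ⟪us, A y2 + a⟫ + ψ y2 = (1 - s) * a2 + s * b2 := hgaff u u' s y2
  have heq : (1 - s) * a1 + s * b1 = (1 - s) * a2 + s * b2 := by linear_combination -hsd
  have hmid : c'' ≤ ⟪us, A (yt t) + a⟫ + ψ (yt t) := by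
    have := hgaff u u' s (yt t)
    rw [husdef, this]
    simp only [hGdef] at hug hu'g
    nlinarith [hs0, hs1, hug, hu'g]
  have hup : ⟪us, A (yt t) + a⟫ + ψ (yt t) ≤ (1 - s) * a1 + s * b1 := by
    have h := hgcv us t htI
    rw [hseg1, hseg2] at h
    calc ⟪us, A (yt t) + a⟫ + ψ (yt t)
        ≤ (1 - t) * ((1 - s) * a1 + s * b1) + t * ((1 - s) * a2 + s * b2) := h
      _ = (1 - s) * a1 + s * b1 := by rw [← heq]; ring
  rcases hmin us husX with h | h
  · rw [hseg1] at h; linarith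
  · rw [hseg2, ← heq] at h; linarith

/-- Finite-family version, by induction. -/
private lemma aux_list (A : Ey →ₗ[ℝ] Ex) (a : Ex) (ψ : Ey → ℝ) (Y : Set Ey)
    (hYne : Y.Nonempty) (hYcv : Convex ℝ Y) (hψcv : ConvexOn ℝ Y ψ) (hψc : ContinuousOn ψ Y) :
    ∀ (l : List Ey) (X' : Set Ex) (c : ℝ), IsCompact X' → Convex ℝ X' →
      (∀ y ∈ Y, ∀ c' < c, ∃ u ∈ X', c' ≤ ⟪u, A y + a⟫ + ψ y) →
      (∀ y ∈ l, y ∈ Y) → ∀ c' < c, ∃ u ∈ X', ∀ y ∈ l, c' ≤ ⟪u, A y + a⟫ + ψ y := by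
  intro l
  induction l with
  | nil =>
    intro X' c hcp hcv hsup _ c' hc'
    obtain ⟨y0, hy0⟩ := hYne
    obtain ⟨u, hu, _⟩ := hsup y0 hy0 c' hc'
    exact ⟨u, hu, by simp⟩
  | cons y0 l ih =>
    intro X' c hcp hcv hsup hl c' hc'
    set c'' : ℝ := (c' + c) / 2 with hc''def
    have hc'c'' : c' < c'' := by rw [hc''def]; linarith
    have hc''c : c'' < c := by rw [hc''def]; linarith
    have hy0Y : y0 ∈ Y := hl y0 List.mem_cons_self
    set X'' : Set Ex := X' ∩ {u | c'' ≤ ⟪u, A y0 + a⟫ + ψ y0} with hX''def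
    have hcl : IsClosed {u : Ex | c'' ≤ ⟪u, A y0 + a⟫ + ψ y0} :=
      isClosed_le continuous_const ((continuous_id.inner continuous_const).add continuous_const)
    have hcp'' : IsCompact X'' := hcp.inter_right hcl
    have hcv'' : Convex ℝ X'' := by
      intro u hu v hv p q hp hq hpq
      refine ⟨hcv hu.1 hv.1 hp hq hpq, ?_⟩
      have h1 : c'' ≤ ⟪u, A y0 + a⟫ + ψ y0 := hu.2
      have h2 : c'' ≤ ⟪v, A y0 + a⟫ + ψ y0 := hv.2
      have : ⟪p • u + q • v, A y0 + a⟫ = p * ⟪u, A y0 + a⟫ + q * ⟪v, A y0 + a⟫ := by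
        rw [inner_add_left, real_inner_smul_left, real_inner_smul_left]
      simp only [Set.mem_setOf_eq, this]
      have e1 : p * c'' + q * c'' = c'' := by rw [← add_mul, hpq, one_mul]
      have e2 : p * ψ y0 + q * ψ y0 = ψ y0 := by rw [← add_mul, hpq, one_mul]
      nlinarith [mul_le_mul_of_nonneg_left h1 hp, mul_le_mul_of_nonneg_left h2 hq, e1, e2]
    have hsup'' : ∀ y ∈ Y, ∀ d < c'', ∃ u ∈ X'', d ≤ ⟪u, A y + a⟫ + ψ y := by
      intro y hy d hd
      have hmax : max d c'' < c := max_lt (lt_trans hd hc''c) hc''c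
      obtain ⟨u, huX, h1, h2⟩ :=
        aux_pair A a ψ Y hYcv hψcv hψc X' hcp hcv c hsup hy0Y hy hmax
      exact ⟨u, ⟨huX, le_trans (le_max_right d c'') h1⟩, le_trans (le_max_left d c'') h2⟩
    obtain ⟨u, huX'', hul⟩ := ih X'' c'' hcp'' hcv'' hsup''
      (fun y hy => hl y (List.mem_cons_of_mem y0 hy)) c' hc'c''
    refine ⟨u, huX''.1, ?_⟩
    intro y hy
    rcases List.mem_cons.mp hy with rfl | hy
    · exact le_trans (le_of_lt hc'c'') huX''.2
    · exact hul y hy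

/-- Full version via compactness (finite intersection property). -/
private lemma aux_all (A : Ey →ₗ[ℝ] Ex) (a : Ex) (ψ : Ey → ℝ) (Y : Set Ey)
    (hYne : Y.Nonempty) (hYcv : Convex ℝ Y) (hψcv : ConvexOn ℝ Y ψ) (hψc : ContinuousOn ψ Y)
    (X' : Set Ex) (hcp : IsCompact X') (hcv : Convex ℝ X') (c : ℝ)
    (hsup : ∀ y ∈ Y, ∀ c' < c, ∃ u ∈ X', c' ≤ ⟪u, A y + a⟫ + ψ y) :
    ∀ c' < c, ∃ u ∈ X', ∀ y ∈ Y, c' ≤ ⟪u, A y + a⟫ + ψ y := by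
  intro c' hc'
  by_contra hcon
  push_neg at hcon
  set Z : Y → Set Ex := fun y => {u | c' ≤ ⟪u, A y.1 + a⟫ + ψ y.1} with hZdef
  have hZc : ∀ y : Y, IsClosed (Z y) := fun y =>
    isClosed_le continuous_const ((continuous_id.inner continuous_const).add continuous_const)
  have hempty : X' ∩ ⋂ y : Y, Z y = ∅ := by
    ext u
    simp only [Set.mem_inter_iff, Set.mem_iInter, Set.mem_empty_iff_false, iff_false, not_and,
      not_forall]
    intro huX
    obtain ⟨y, hyY, hlt⟩ := hcon u huX
    exact ⟨⟨y, hyY⟩, by simp only [hZdef, Set.mem_setOf_eq]; exact not_le.mpr hlt⟩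
  obtain ⟨w, hw⟩ := hcp.elim_finite_subfamily_closed Z hZc hempty
  have hmemY : ∀ y ∈ (w.toList.map Subtype.val), y ∈ Y := by
    intro y hy
    obtain ⟨i, _, rfl⟩ := List.mem_map.mp hy
    exact i.2
  obtain ⟨u, huX, hul⟩ := aux_list A a ψ Y hYne hYcv hψcv hψc
    (w.toList.map Subtype.val) X' c hcp hcv hsup hmemY c' hc'
  have : u ∈ X' ∩ ⋂ i ∈ w, Z i := by
    refine ⟨huX, Set.mem_iInter₂.mpr fun i hi => ?_⟩
    exact hul i.1 (List.mem_map.mpr ⟨i, Finset.mem_toList.mpr hi, rfl⟩)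
  rw [hw] at this
  exact this

end Aux

/-- Proposition 2 (duality and accuracy certificates for the Fenchel-type representation
`f_*(x) = min_{y∈Y} [⟨x, Ay + a⟩ + ψ(y)]`):
given an execution protocol `(y_τ, f'(y_τ))` with `f'(y_τ) = Aᵀ x_τ + ψ'(y_τ)`,
`x_τ ∈ Argmax_{x∈X} ⟨x, A y_τ + a⟩`, and an accuracy certificate `λ`, the aggregated points
`x̂ = Σ λ_τ x_τ`, `ŷ = Σ λ_τ y_τ` are feasible and
`[f(ŷ) − Opt(D)] + [Opt(P) − f_*(x̂)] = f(ŷ) − f_*(x̂) ≤ resolution`. -/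
theorem stmt1
    {Ex Ey : Type*} [NormedAddCommGroup Ex] [InnerProductSpace ℝ Ex] [FiniteDimensional ℝ Ex]
    [NormedAddCommGroup Ey] [InnerProductSpace ℝ Ey] [FiniteDimensional ℝ Ey]
    (X : Set Ex) (hXne : X.Nonempty) (hXcl : IsClosed X)
    (hXbd : Bornology.IsBounded X) (hXcv : Convex ℝ X)
    (Y : Set Ey) (hYne : Y.Nonempty) (hYcl : IsClosed Y)
    (hYbd : Bornology.IsBounded Y) (hYcv : Convex ℝ Y)
    (A : Ey →ₗ[ℝ] Ex) (a : Ex)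
    (ψ : Ey → ℝ) (K : NNReal) (hψlip : LipschitzOnWith K ψ Y) (hψcv : ConvexOn ℝ Y ψ)
    (ψ' : Ey → Ey) (hψ' : ∀ y ∈ Y, ∀ z ∈ Y, ψ y + ⟪ψ' y, z - y⟫ ≤ ψ z)
    (fstar : Ex → ℝ)
    (hfstar : ∀ x, fstar x = sInf ((fun y => ⟪x, A y + a⟫ + ψ y) '' Y))
    (f : Ey → ℝ)
    (hf : ∀ y, f y = sSup ((fun x => ⟪x, A y + a⟫ + ψ y) '' X))
    (OptP OptD : ℝ) (hOptP : OptP = sSup (fstar '' X)) (hOptD : OptD = sInf (f '' Y))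
    (t : ℕ) (y : Fin t → Ey) (hy : ∀ τ, y τ ∈ Y)
    (x : Fin t → Ex)
    (hx : ∀ τ, x τ ∈ X ∧ ∀ u ∈ X, ⟪u, A (y τ) + a⟫ ≤ ⟪x τ, A (y τ) + a⟫)
    (lam : Fin t → ℝ) (hlam : ∀ τ, 0 ≤ lam τ) (hsum : ∑ τ, lam τ = 1)
    (xhat : Ex) (hxhat : xhat = ∑ τ, lam τ • x τ)
    (yhat : Ey) (hyhat : yhat = ∑ τ, lam τ • y τ) :
    xhat ∈ X ∧ yhat ∈ Y ∧
      (f yhat - OptD) + (OptP - fstar xhat) = f yhat - fstar xhat ∧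
      f yhat - fstar xhat ≤
        sSup ((fun z =>
          ∑ τ, lam τ * ⟪LinearMap.adjoint A (x τ) + ψ' (y τ), y τ - z⟫) '' Y) := by
  have hA : Continuous A := A.continuous_of_finiteDimensional
  have hXcp : IsCompact X := Metric.isCompact_of_isClosed_isBounded hXcl hXbd
  have hYcp : IsCompact Y := Metric.isCompact_of_isClosed_isBounded hYcl hYbd
  have hψc : ContinuousOn ψ Y := hψlip.continuousOn
  have hxhatX : xhat ∈ X := by
    rw [hxhat]
    exact hXcv.sum_mem (fun i _ => hlam i) hsum (fun i _ => (hx i).1)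
  have hyhatY : yhat ∈ Y := by
    rw [hyhat]
    exact hYcv.sum_mem (fun i _ => hlam i) hsum (fun i _ => hy i)
  -- global bound on the coupling function
  have hΦ : ContinuousOn (fun p : Ex × Ey => ⟪p.1, A p.2 + a⟫ + ψ p.2) (X ×ˢ Y) := by
    apply ContinuousOn.add
    · exact (continuous_fst.inner ((hA.comp continuous_snd).add continuous_const)).continuousOn
    · exact hψc.comp continuous_snd.continuousOn (fun p hp => hp.2)
  obtain ⟨C, hC⟩ := (hXcp.prod hYcp).exists_bound_of_continuousOn hΦ
  have hbd : ∀ u ∈ X, ∀ z ∈ Y, -C ≤ ⟪u, A z + a⟫ + ψ z ∧ ⟪u, A z + a⟫ + ψ z ≤ C := by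
    intro u hu z hz
    have := hC (u, z) ⟨hu, hz⟩
    rw [Real.norm_eq_abs] at this
    exact abs_le.mp this
  have hbaX : ∀ z ∈ Y, BddAbove ((fun u => ⟪u, A z + a⟫ + ψ z) '' X) := by
    intro z hz
    exact ⟨C, by rintro _ ⟨u, hu, rfl⟩; exact (hbd u hu z hz).2⟩
  have hbbY : ∀ u ∈ X, BddBelow ((fun z => ⟪u, A z + a⟫ + ψ z) '' Y) := by
    intro u hu
    exact ⟨-C, by rintro _ ⟨z, hz, rfl⟩; exact (hbd u hu z hz).1⟩
  have hfge : ∀ z ∈ Y, ∀ u ∈ X, ⟪u, A z + a⟫ + ψ z ≤ f z := by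
    intro z hz u hu
    rw [hf]
    exact le_csSup (hbaX z hz) ⟨u, hu, rfl⟩
  have hfsle : ∀ u ∈ X, ∀ z ∈ Y, fstar u ≤ ⟪u, A z + a⟫ + ψ z := by
    intro u hu z hz
    rw [hfstar]
    exact csInf_le (hbbY u hu) ⟨z, hz, rfl⟩
  obtain ⟨x0, hx0⟩ := id hXne
  obtain ⟨y0, hy0⟩ := id hYne
  have hfbb : BddBelow (f '' Y) := by
    refine ⟨-C, ?_⟩
    rintro _ ⟨z, hz, rfl⟩
    exact le_trans (hbd x0 hx0 z hz).1 (hfge z hz x0 hx0)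
  have hfsba : BddAbove (fstar '' X) := by
    refine ⟨C, ?_⟩
    rintro _ ⟨u, hu, rfl⟩
    exact le_trans (hfsle u hu y0 hy0) (hbd u hu y0 hy0).2
  have hOptDle : ∀ z ∈ Y, OptD ≤ f z := by
    intro z hz
    rw [hOptD]
    exact csInf_le hfbb ⟨z, hz, rfl⟩
  have hOptPge : ∀ u ∈ X, fstar u ≤ OptP := by
    intro u hu
    rw [hOptP]
    exact le_csSup hfsba ⟨u, hu, rfl⟩
  -- weak duality
  have hweak : OptP ≤ OptD := by
    rw [hOptP, hOptD]
    apply csSup_le (hXne.image _)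
    rintro _ ⟨u, hu, rfl⟩
    apply le_csInf (hYne.image _)
    rintro _ ⟨z, hz, rfl⟩
    exact le_trans (hfsle u hu z hz) (hfge z hz u hu)
  -- strong duality via the minimax machinery
  have hsupD : ∀ z ∈ Y, ∀ c' < OptD, ∃ u ∈ X, c' ≤ ⟪u, A z + a⟫ + ψ z := by
    intro z hz c' hc'
    have h1 : c' < f z := lt_of_lt_of_le hc' (hOptDle z hz)
    rw [hf] at h1
    obtain ⟨_, ⟨u, hu, rfl⟩, hlt⟩ := exists_lt_of_lt_csSup (hXne.image _) h1
    exact ⟨u, hu, hlt.le⟩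
  have hPge : ∀ c' < OptD, c' ≤ OptP := by
    intro c' hc'
    obtain ⟨u, huX, hall⟩ := aux_all A a ψ Y hYne hYcv hψcv hψc X hXcp hXcv OptD hsupD c' hc'
    have h1 : c' ≤ fstar u := by
      rw [hfstar]
      apply le_csInf (hYne.image _)
      rintro _ ⟨z, hz, rfl⟩
      exact hall z hz
    exact le_trans h1 (hOptPge u huX)
  have hstrong : OptD ≤ OptP := by
    by_contra h
    push_neg at h
    have := hPge ((OptP + OptD) / 2) (by linarith)
    linarith
  have hPD : OptP = OptD := le_antisymm hweak hstrong
  -- resolution bound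
  set r : Ey → ℝ := fun z => ∑ τ, lam τ * ⟪LinearMap.adjoint A (x τ) + ψ' (y τ), y τ - z⟫
    with hrdef
  have hrc : Continuous r := by
    apply continuous_finset_sum
    intro τ _
    exact continuous_const.mul
      (Continuous.inner continuous_const (continuous_const.sub continuous_id))
  have hRbdd : BddAbove (r '' Y) := hYcp.bddAbove_image hrc.continuousOn
  set Sv : ℝ := ∑ τ, lam τ * (⟪x τ, A (y τ) + a⟫ + ψ (y τ)) with hSvdef
  -- f yhat ≤ Sv
  have hfS : f yhat ≤ Sv := by
    rw [hf]
    apply csSup_le (hXne.image _)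
    rintro _ ⟨u, hu, rfl⟩
    have hjen : ψ yhat ≤ ∑ τ, lam τ * ψ (y τ) := by
      rw [hyhat]
      exact hψcv.map_sum_le (fun i _ => hlam i) hsum (fun i _ => hy i)
    have hlin : ⟪u, A yhat + a⟫ = ∑ τ, lam τ * ⟪u, A (y τ) + a⟫ := by
      have hv : A yhat + a = ∑ τ, lam τ • (A (y τ) + a) := by
        rw [hyhat, map_sum]
        simp only [map_smul, smul_add]
        rw [Finset.sum_add_distrib, ← Finset.sum_smul, hsum, one_smul]
      rw [hv, inner_sum]
      exact Finset.sum_congr rfl fun τ _ => real_inner_smul_right u _ (lam τ)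
    have step1 : ⟪u, A yhat + a⟫ + ψ yhat ≤ ∑ τ, lam τ * (⟪u, A (y τ) + a⟫ + ψ (y τ)) := by
      rw [hlin]
      have : ∑ τ, lam τ * (⟪u, A (y τ) + a⟫ + ψ (y τ)) =
          ∑ τ, lam τ * ⟪u, A (y τ) + a⟫ + ∑ τ, lam τ * ψ (y τ) := by
        rw [← Finset.sum_add_distrib]
        congr 1
        ext τ
        ring
      rw [this]
      linarith
    refine le_trans step1 (Finset.sum_le_sum fun τ _ => ?_)
    exact mul_le_mul_of_nonneg_left (by linarith [(hx τ).2 u hu]) (hlam τ)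
  -- Sv - sSup (r '' Y) ≤ fstar xhat
  have hSf : Sv - sSup (r '' Y) ≤ fstar xhat := by
    rw [hfstar]
    apply le_csInf (hYne.image _)
    rintro _ ⟨z, hz, rfl⟩
    show Sv - sSup (r '' Y) ≤ ⟪xhat, A z + a⟫ + ψ z
    have hrz : r z ≤ sSup (r '' Y) := le_csSup hRbdd ⟨z, hz, rfl⟩
    have hxh : ⟪xhat, A z + a⟫ = ∑ τ, lam τ * ⟪x τ, A z + a⟫ := by
      rw [hxhat, sum_inner]
      simp [real_inner_smul_left]
    have hkey : Sv - (⟪xhat, A z + a⟫ + ψ z) ≤ r z := by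
      have hterm : ∀ τ : Fin t,
          lam τ * ((⟪x τ, A (y τ) + a⟫ + ψ (y τ)) - (⟪x τ, A z + a⟫ + ψ z)) ≤
            lam τ * ⟪LinearMap.adjoint A (x τ) + ψ' (y τ), y τ - z⟫ := by
        intro τ
        apply mul_le_mul_of_nonneg_left _ (hlam τ)
        have e1 : ⟪LinearMap.adjoint A (x τ) + ψ' (y τ), y τ - z⟫ =
            ⟪x τ, A (y τ) - A z⟫ + ⟪ψ' (y τ), y τ - z⟫ := by
          rw [inner_add_left, LinearMap.adjoint_inner_left, map_sub]
        have e2 : ψ (y τ) - ψ z ≤ ⟪ψ' (y τ), y τ - z⟫ := by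
          have h0 := hψ' (y τ) (hy τ) z hz
          have h1 : ⟪ψ' (y τ), y τ - z⟫ = -⟪ψ' (y τ), z - y τ⟫ := by
            rw [← inner_neg_right]
            congr 1
            abel
          linarith
        have e3 : ⟪x τ, A (y τ) - A z⟫ = ⟪x τ, A (y τ) + a⟫ - ⟪x τ, A z + a⟫ := by
          rw [inner_sub_right, inner_add_right, inner_add_right]
          ring
        rw [e1, e3]
        linarith
      have hsplit : Sv - (⟪xhat, A z + a⟫ + ψ z) =
          ∑ τ, lam τ * ((⟪x τ, A (y τ) + a⟫ + ψ (y τ)) - (⟪x τ, A z + a⟫ + ψ z)) := by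
        rw [hxh]
        have hmain : ∑ τ, lam τ * ((⟪x τ, A (y τ) + a⟫ + ψ (y τ)) - (⟪x τ, A z + a⟫ + ψ z)) =
            Sv - (∑ τ, lam τ * ⟪x τ, A z + a⟫ + ∑ τ, lam τ * ψ z) := by
          rw [hSvdef, ← Finset.sum_add_distrib, ← Finset.sum_sub_distrib]
          exact Finset.sum_congr rfl fun τ _ => by ring
        rw [hmain, ← Finset.sum_mul, hsum, one_mul]
      rw [hsplit, hrdef]
      exact Finset.sum_le_sum fun τ _ => hterm τ
    linarith
  -- conclusion
  refine ⟨hxhatX, hyhatY, by linarith, by linarith⟩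
end

section
/- Let X ⊂ E_x and Y ⊂ E_y be nonempty closed bounded convex subsets of Euclidean spaces, and let F(x,y): X × Y → ℝ be Lipschitz continuous, concave in x ∈ X for each y ∈ Y and convex in y ∈ Y for each x ∈ X. Set f(y) = max_{x∈X} F(x,y) and f_*(x) = min_{y∈Y} F(x,y). Let F'_y(x,y) be a selection with F'_y(x,y) ∈ ∂_y F(x,y) for all x ∈ X, y ∈ Y, and for each y let x(y) ∈ Argmax_{x∈X} F(x,y). Given y_1, ..., y_t ∈ Y and weights λ_1, ..., λ_t ≥ 0 with Σ_τ λ_τ = 1, set x̂ = Σ_τ λ_τ x(y_τ) and ŷ = Σ_τ λ_τ y_τ. Then x̂ ∈ X, ŷ ∈ Y and f(ŷ) − f_*(x̂) ≤ max_{y∈Y} Σ_{τ=1}^t λ_τ ⟨F'_y(x(y_τ), y_τ), y_τ − y⟩. -/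
open RealInnerProductSpace

/-- Remark 1, first part: for a Lipschitz continuous saddle function `F(x,y)`
(concave in `x ∈ X`, convex in `y ∈ Y`), a subgradient selection `F'_y(x,y) ∈ ∂_y F(x,y)`,
exact maximizers `x(y) ∈ Argmax_{x∈X} F(x,y)`, and an accuracy certificate `λ`, the points
`x̂ = Σ λ_τ x(y_τ)`, `ŷ = Σ λ_τ y_τ` are feasible and `f(ŷ) − f_*(x̂) ≤ resolution`. -/
theorem stmt2
    {Ex Ey : Type*} [NormedAddCommGroup Ex] [InnerProductSpace ℝ Ex] [FiniteDimensional ℝ Ex]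
    [NormedAddCommGroup Ey] [InnerProductSpace ℝ Ey] [FiniteDimensional ℝ Ey]
    (X : Set Ex) (hXne : X.Nonempty) (hXcl : IsClosed X)
    (hXbd : Bornology.IsBounded X) (hXcv : Convex ℝ X)
    (Y : Set Ey) (hYne : Y.Nonempty) (hYcl : IsClosed Y)
    (hYbd : Bornology.IsBounded Y) (hYcv : Convex ℝ Y)
    (F : Ex → Ey → ℝ)
    (K : NNReal) (hFlip : LipschitzOnWith K (fun p : Ex × Ey => F p.1 p.2) (X ×ˢ Y))
    (hFconc : ∀ y ∈ Y, ConcaveOn ℝ X (fun x => F x y))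
    (hFconv : ∀ x ∈ X, ConvexOn ℝ Y (fun y => F x y))
    (Fy' : Ex → Ey → Ey)
    (hFy' : ∀ x ∈ X, ∀ y ∈ Y, ∀ z ∈ Y, F x y + ⟪Fy' x y, z - y⟫ ≤ F x z)
    (xsel : Ey → Ex)
    (hxsel : ∀ y ∈ Y, xsel y ∈ X ∧ ∀ u ∈ X, F u y ≤ F (xsel y) y)
    (f : Ey → ℝ) (hf : ∀ y, f y = sSup ((fun x => F x y) '' X))
    (fstar : Ex → ℝ) (hfstar : ∀ x, fstar x = sInf ((fun y => F x y) '' Y))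
    (t : ℕ) (y : Fin t → Ey) (hy : ∀ τ, y τ ∈ Y)
    (lam : Fin t → ℝ) (hlam : ∀ τ, 0 ≤ lam τ) (hsum : ∑ τ, lam τ = 1)
    (xhat : Ex) (hxhat : xhat = ∑ τ, lam τ • xsel (y τ))
    (yhat : Ey) (hyhat : yhat = ∑ τ, lam τ • y τ) :
    xhat ∈ X ∧ yhat ∈ Y ∧
      f yhat - fstar xhat ≤
        sSup ((fun z => ∑ τ, lam τ * ⟪Fy' (xsel (y τ)) (y τ), y τ - z⟫) '' Y) := by
  have hxhatX : xhat ∈ X := by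
    rw [hxhat]
    exact hXcv.sum_mem (fun τ _ => hlam τ) hsum (fun τ _ => (hxsel (y τ) (hy τ)).1)
  have hyhatY : yhat ∈ Y := by
    rw [hyhat]
    exact hYcv.sum_mem (fun τ _ => hlam τ) hsum (fun τ _ => hy τ)
  refine ⟨hxhatX, hyhatY, ?_⟩
  set g : Ey → ℝ := fun z => ∑ τ, lam τ * ⟪Fy' (xsel (y τ)) (y τ), y τ - z⟫ with hg
  have hYcomp : IsCompact Y := Metric.isCompact_of_isClosed_isBounded hYcl hYbd
  have hgcont : ContinuousOn g Y := by
    exact (continuous_finset_sum _ fun τ _ =>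
      continuous_const.mul ((continuous_const.inner (continuous_const.sub continuous_id)))).continuousOn
  have hbdd : BddAbove (g '' Y) := hYcomp.bddAbove_image hgcont
  set S := sSup (g '' Y) with hS
  -- key pointwise bound
  have key : ∀ x ∈ X, ∀ z ∈ Y, F x yhat ≤ F xhat z + S := by
    intro x hx z hz
    have h1 : F x yhat ≤ ∑ τ, lam τ * F x (y τ) := by
      rw [hyhat]
      exact (hFconv x hx).map_sum_le (fun τ _ => hlam τ) (by simpa using hsum)
        (fun τ _ => hy τ)
    have h2 : ∑ τ, lam τ * F x (y τ) ≤ ∑ τ, lam τ * F (xsel (y τ)) (y τ) := by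
      apply Finset.sum_le_sum
      intro τ _
      exact mul_le_mul_of_nonneg_left ((hxsel (y τ) (hy τ)).2 x hx) (hlam τ)
    have h3 : ∑ τ, lam τ * F (xsel (y τ)) (y τ) ≤
        ∑ τ, lam τ * (F (xsel (y τ)) z + ⟪Fy' (xsel (y τ)) (y τ), y τ - z⟫) := by
      apply Finset.sum_le_sum
      intro τ _
      apply mul_le_mul_of_nonneg_left _ (hlam τ)
      have := hFy' (xsel (y τ)) (hxsel (y τ) (hy τ)).1 (y τ) (hy τ) z hz
      have hinner : ⟪Fy' (xsel (y τ)) (y τ), y τ - z⟫ = -⟪Fy' (xsel (y τ)) (y τ), z - y τ⟫ := by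
        rw [← inner_neg_right, neg_sub]
      rw [hinner]
      linarith
    have h4 : ∑ τ, lam τ * F (xsel (y τ)) z ≤ F xhat z := by
      rw [hxhat]
      exact (hFconc z hz).le_map_sum (fun τ _ => hlam τ) (by simpa using hsum)
        (fun τ _ => (hxsel (y τ) (hy τ)).1)
    have h5 : g z ≤ S := le_csSup hbdd (Set.mem_image_of_mem g hz)
    have h3' : ∑ τ, lam τ * F (xsel (y τ)) (y τ) ≤
        (∑ τ, lam τ * F (xsel (y τ)) z) + g z := by
      rw [hg]
      calc _ ≤ _ := h3
      _ = _ := by rw [← Finset.sum_add_distrib]; congr 1; ext τ; ring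
    linarith
  have hSle : ∀ z ∈ Y, f yhat ≤ F xhat z + S := by
    intro z hz
    rw [hf]
    apply csSup_le (hXne.image _)
    rintro _ ⟨x, hx, rfl⟩
    exact key x hx z hz
  have hfstar : f yhat - S ≤ fstar xhat := by
    rw [hfstar]
    apply le_csInf (hYne.image _)
    rintro _ ⟨z, hz, rfl⟩
    linarith [hSle z hz]
  linarith
end

section
/- Let X ⊂ E_x and Y ⊂ E_y be nonempty closed bounded convex subsets of Euclidean spaces, and let F(x,y): X × Y → ℝ be Lipschitz continuous, concave in x ∈ X for each y ∈ Y and convex in y ∈ Y for each x ∈ X. Set f(y) = max_{x∈X} F(x,y) and f_*(x) = min_{y∈Y} F(x,y). Let δ ≥ 0 and let x_δ(y) ∈ X satisfy F(x_δ(y), y) ≥ max_{x∈X} F(x,y) − δ for all y ∈ Y, and let F'_y(x,y) ∈ ∂_y F(x,y) be a subgradient selection. Given y_1, ..., y_t ∈ Y and weights λ_1, ..., λ_t ≥ 0 with Σ_τ λ_τ = 1, set x̂ = Σ_τ λ_τ x_δ(y_τ) and ŷ = Σ_τ λ_τ y_τ. Then x̂ ∈ X, ŷ ∈ Y and f(ŷ)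 − f_*(x̂) ≤ max_{y∈Y} Σ_{τ=1}^t λ_τ ⟨F'_y(x_δ(y_τ), y_τ), y_τ − y⟩ + δ. -/
open RealInnerProductSpace

/-- Remark 1, "Moreover" part: same as the exact-maximizer statement, but with
`δ`-approximate maximizers `x_δ(y)` (i.e. `F(x_δ(y), y) ≥ max_{x∈X} F(x,y) − δ`) and
approximate subgradients; the duality gap bound picks up an extra `δ`:
`f(ŷ) − f_*(x̂) ≤ resolution + δ`. -/
theorem stmt3
    {Ex Ey : Type*} [NormedAddCommGroup Ex] [InnerProductSpace ℝ Ex] [FiniteDimensional ℝ Ex]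
    [NormedAddCommGroup Ey] [InnerProductSpace ℝ Ey] [FiniteDimensional ℝ Ey]
    (X : Set Ex) (hXne : X.Nonempty) (hXcl : IsClosed X)
    (hXbd : Bornology.IsBounded X) (hXcv : Convex ℝ X)
    (Y : Set Ey) (hYne : Y.Nonempty) (hYcl : IsClosed Y)
    (hYbd : Bornology.IsBounded Y) (hYcv : Convex ℝ Y)
    (F : Ex → Ey → ℝ)
    (K : NNReal) (hFlip : LipschitzOnWith K (fun p : Ex × Ey => F p.1 p.2) (X ×ˢ Y))
    (hFconc : ∀ y ∈ Y, ConcaveOn ℝ X (fun x => F x y))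
    (hFconv : ∀ x ∈ X, ConvexOn ℝ Y (fun y => F x y))
    (Fy' : Ex → Ey → Ey)
    (hFy' : ∀ x ∈ X, ∀ y ∈ Y, ∀ z ∈ Y, F x y + ⟪Fy' x y, z - y⟫ ≤ F x z)
    (δ : ℝ) (hδ : 0 ≤ δ)
    (xdel : Ey → Ex)
    (hxdel : ∀ y ∈ Y, xdel y ∈ X ∧ ∀ u ∈ X, F u y - δ ≤ F (xdel y) y)
    (f : Ey → ℝ) (hf : ∀ y, f y = sSup ((fun x => F x y) '' X))
    (fstar : Ex → ℝ) (hfstar : ∀ x, fstar x = sInf ((fun y => F x y) '' Y))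
    (t : ℕ) (y : Fin t → Ey) (hy : ∀ τ, y τ ∈ Y)
    (lam : Fin t → ℝ) (hlam : ∀ τ, 0 ≤ lam τ) (hsum : ∑ τ, lam τ = 1)
    (xhat : Ex) (hxhat : xhat = ∑ τ, lam τ • xdel (y τ))
    (yhat : Ey) (hyhat : yhat = ∑ τ, lam τ • y τ) :
    xhat ∈ X ∧ yhat ∈ Y ∧
      f yhat - fstar xhat ≤
        sSup ((fun z => ∑ τ, lam τ * ⟪Fy' (xdel (y τ)) (y τ), y τ - z⟫) '' Y) + δ := by
  have ht : Nonempty (Fin t) := by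
    rcases Nat.eq_zero_or_pos t with h | h
    · subst h; simp at hsum
    · exact ⟨⟨0, h⟩⟩
  have hxX : xhat ∈ X := by
    rw [hxhat]
    exact hXcv.sum_mem (fun i _ => hlam i) (by simpa using hsum)
      (fun i _ => (hxdel (y i) (hy i)).1)
  have hyY : yhat ∈ Y := by
    rw [hyhat]
    exact hYcv.sum_mem (fun i _ => hlam i) (by simpa using hsum) (fun i _ => hy i)
  refine ⟨hxX, hyY, ?_⟩
  set A : ℝ := ∑ τ, lam τ * F (xdel (y τ)) (y τ) with hA
  set g : Ey → ℝ := fun z => ∑ τ, lam τ * ⟪Fy' (xdel (y τ)) (y τ), y τ - z⟫ with hg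
  have hYcp : IsCompact Y := Metric.isCompact_of_isClosed_isBounded hYcl hYbd
  have hgcont : Continuous g := by
    apply continuous_finset_sum
    intro i _
    exact continuous_const.mul (Continuous.inner continuous_const
      (continuous_const.sub continuous_id))
  have hbdd : BddAbove (g '' Y) := (hYcp.image hgcont).bddAbove
  -- Step 1: f yhat ≤ A + δ
  have h1 : f yhat ≤ A + δ := by
    rw [hf]
    apply csSup_le (hXne.image _)
    rintro _ ⟨x, hx, rfl⟩
    have j : F x yhat ≤ ∑ τ, lam τ * F x (y τ) := by
      rw [hyhat]
      exact (hFconv x hx).map_sum_le (fun i _ => hlam i) (by simpa using hsum)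
        (fun i _ => hy i)
    refine j.trans ?_
    have : ∑ τ, lam τ * F x (y τ) ≤ ∑ τ, lam τ * (F (xdel (y τ)) (y τ) + δ) := by
      apply Finset.sum_le_sum
      intro i _
      have := (hxdel (y i) (hy i)).2 x hx
      exact mul_le_mul_of_nonneg_left (by linarith) (hlam i)
    refine this.trans ?_
    have : ∑ τ, lam τ * (F (xdel (y τ)) (y τ) + δ) = A + δ := by
      simp [mul_add, Finset.sum_add_distrib, ← Finset.sum_mul, hsum, hA]
    linarith
  -- Step 2: A - sSup (g '' Y) ≤ fstar xhat
  have h2 : A - sSup (g '' Y) ≤ fstar xhat := by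
    rw [hfstar]
    apply le_csInf (hYne.image _)
    rintro _ ⟨z, hz, rfl⟩
    have j : ∑ τ, lam τ * F (xdel (y τ)) z ≤ F xhat z := by
      rw [hxhat]
      exact (hFconc z hz).le_map_sum (fun i _ => hlam i) (by simpa using hsum)
        (fun i _ => (hxdel (y i) (hy i)).1)
    have k : A - g z ≤ ∑ τ, lam τ * F (xdel (y τ)) z := by
      rw [hA, hg, ← Finset.sum_sub_distrib]
      apply Finset.sum_le_sum
      intro i _
      have hsub := hFy' (xdel (y i)) (hxdel (y i) (hy i)).1 (y i) (hy i) z hz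
      have hin : ⟪Fy' (xdel (y i)) (y i), y i - z⟫
          = -⟪Fy' (xdel (y i)) (y i), z - y i⟫ := by
        rw [← inner_neg_right, neg_sub]
      rw [hin]
      have : F (xdel (y i)) (y i) + ⟪Fy' (xdel (y i)) (y i), z - y i⟫
          ≤ F (xdel (y i)) z := hsub
      nlinarith [hlam i, mul_le_mul_of_nonneg_left this (hlam i)]
    have hgz : g z ≤ sSup (g '' Y) := le_csSup hbdd ⟨z, hz, rfl⟩
    linarith
  linarith
end

section
/- Consider a proximal setup (‖·‖, ω) on Y. Let e_1, ..., e_m be affine functions on E, U = {y ∈ Y : e_i(y) ≤ 0, i = 1, ..., m} intersect the relative interior of Y, let y ∈ Y° and ξ ∈ E, set p = ξ − ω'(y), and let y_* be the unique minimizer of ⟨p, z⟩ + ω(z) over z ∈ U, with Lagrange multipliers λ_1, ..., λ_m ≥ 0 satisfying λ_i e_i(y_*) = 0 and ⟨p + ω'(y_*) + Σ_i λ_i e_i', u − y_*⟩ ≥ 0 for all u ∈ Y. Then for all u ∈ Y: ⟨ξ, y_* − u⟩ − Σ_{i=1}^m λ_i e_i(u) ≤ V_y(u) − V_{y_*}(u)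 − V_y(y_*). -/
open RealInnerProductSpace

/-- Lemma A (iii): in the situation of part (ii), with `p = ξ − ω'(y)` for some `y ∈ Y°`,
the minimizer `y_*` and the Lagrange multipliers `λ_i` satisfy, for every `u ∈ Y`,
`⟨ξ, y_* − u⟩ − Σ_i λ_i e_i(u) ≤ V_y(u) − V_{y_*}(u) − V_y(y_*)`. -/
theorem stmt9
    {E : Type*} [NormedAddCommGroup E] [InnerProductSpace ℝ E] [FiniteDimensional ℝ E]
    (Y : Set E) (hYne : Y.Nonempty) (hYcl : IsClosed Y)
    (hYbd : Bornology.IsBounded Y) (hYcv : Convex ℝ Y)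
    (nrm : E → ℝ)
    (hnrm_add : ∀ u v, nrm (u + v) ≤ nrm u + nrm v)
    (hnrm_smul : ∀ (c : ℝ) (u : E), nrm (c • u) = |c| * nrm u)
    (hnrm_zero : ∀ u, nrm u = 0 ↔ u = 0)
    (ω : E → ℝ) (hωcont : ContinuousOn ω Y) (hωconv : ConvexOn ℝ Y ω)
    (Yo : Set E) (hYo : Yo = {y ∈ Y | ∃ s : E, ∀ z ∈ Y, ω y + ⟪s, z - y⟫ ≤ ω z})
    (ω' : E → E)
    (hω'sub : ∀ y ∈ Yo, ∀ z ∈ Y, ω y + ⟪ω' y, z - y⟫ ≤ ω z)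
    (hω'cont : ContinuousOn ω' Yo)
    (hstrong : ∀ y ∈ Yo, ∀ y' ∈ Yo, nrm (y - y') ^ 2 ≤ ⟪ω' y - ω' y', y - y'⟫)
    (m : ℕ) (ev : Fin m → E) (ec : Fin m → ℝ)
    (U : Set E) (hU : U = {z ∈ Y | ∀ i : Fin m, ⟪ev i, z⟫ + ec i ≤ 0})
    (hUri : (U ∩ intrinsicInterior ℝ Y).Nonempty)
    (y : E) (hy : y ∈ Yo) (ξ : E) (p : E) (hp : p = ξ - ω' y)
    (ystar : E) (hystarU : ystar ∈ U)
    (hystarmin : IsMinOn (fun z => ⟪p, z⟫ + ω z) U ystar)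
    (lam : Fin m → ℝ)
    (hlam : ∀ i, 0 ≤ lam i)
    (hslack : ∀ i, lam i * (⟪ev i, ystar⟫ + ec i) = 0)
    (hvi : ∀ u ∈ Y, 0 ≤ ⟪p + ω' ystar + ∑ i, lam i • ev i, u - ystar⟫) :
    ∀ u ∈ Y,
      ⟪ξ, ystar - u⟫ - ∑ i, lam i * (⟪ev i, u⟫ + ec i) ≤
        (ω u - ω y - ⟪ω' y, u - y⟫) - (ω u - ω ystar - ⟪ω' ystar, u - ystar⟫) -
          (ω ystar - ω y - ⟪ω' y, ystar - y⟫) := by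
  intro u hu
  have key := hvi u hu
  rw [hp] at key
  have hsum : ⟪∑ i, lam i • ev i, u - ystar⟫ = ∑ i, lam i * ⟪ev i, u - ystar⟫ := by
    rw [sum_inner]
    exact Finset.sum_congr rfl fun i _ => real_inner_smul_left _ _ _
  have h1 : ∑ i, lam i * (⟪ev i, u⟫ + ec i) = ∑ i, lam i * ⟪ev i, u - ystar⟫ := by
    refine Finset.sum_congr rfl fun i _ => ?_
    have hs := hslack i
    rw [inner_sub_right]
    linear_combination hs
  rw [inner_add_left, inner_add_left, inner_sub_left, hsum] at key
  rw [h1]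
  have e1 : ⟪ξ, ystar - u⟫ = -⟪ξ, u - ystar⟫ := by
    rw [← neg_sub u ystar, inner_neg_right]
  have e2 : ⟪ω' y, u - y⟫ = ⟪ω' y, u - ystar⟫ + ⟪ω' y, ystar - y⟫ := by
    rw [← inner_add_right]; congr 1; abel
  rw [e1, e2]
  linarith
end

section
/- Consider a proximal setup (‖·‖, ω) on Y. Let I be a finite index set, and for τ ∈ I let g_τ ∈ E with ‖g_τ‖_* ≤ L and y_τ ∈ Y, and define the affine functions h_τ(z) = ⟨g_τ, y_τ − z⟩. Let ℓ > 0 and U = {y ∈ Y : h_τ(y) ≥ ℓ for all τ ∈ I}, and assume U intersects the relative interior of Y. Let ŷ ∈ Y° be such that h_τ(ŷ) ≤ 0 for at least one τ ∈ I, and let y_+ = argmin_{y∈U}[ω(y) − ⟨ω'(ŷ), y⟩]. Then ‖ŷ − y_+‖ ≥ ℓ/L and, for every u ∈ U, V_{y_+}(u) ≤ V_ŷ(u) − ℓ²/(2L²). -/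
open RealInnerProductSpace

section aux
variable {E : Type*} [NormedAddCommGroup E] [InnerProductSpace ℝ E] [FiniteDimensional ℝ E]

lemma nrm_nonneg (nrm : E → ℝ)
    (hnrm_add : ∀ u v, nrm (u + v) ≤ nrm u + nrm v)
    (hnrm_smul : ∀ (c : ℝ) (u : E), nrm (c • u) = |c| * nrm u)
    (u : E) : 0 ≤ nrm u := by
  have h0 : nrm 0 = 0 := by
    have := hnrm_smul 0 0; simpa using this
  have hneg : nrm (-u) = nrm u := by
    have := hnrm_smul (-1) u; simpa using this
  have := hnrm_add u (-u)
  simp [h0, hneg] at this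
  linarith

lemma nrm_dual_pair (nrm : E → ℝ)
    (hnrm_add : ∀ u v, nrm (u + v) ≤ nrm u + nrm v)
    (hnrm_smul : ∀ (c : ℝ) (u : E), nrm (c • u) = |c| * nrm u)
    (hnrm_zero : ∀ u, nrm u = 0 ↔ u = 0)
    (dnrm : E → ℝ)
    (hdnrm : ∀ ξ : E, dnrm ξ = sSup {r : ℝ | ∃ u : E, nrm u ≤ 1 ∧ r = ⟪ξ, u⟫})
    (ξ w : E) : ⟪ξ, w⟫ ≤ dnrm ξ * nrm w := by
  have h0 : nrm 0 = 0 := by have := hnrm_smul 0 0; simpa using this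
  -- a lower bound nrm u ≥ m ‖u‖
  obtain ⟨m, hm, hlow⟩ : ∃ m : ℝ, 0 < m ∧ ∀ u : E, m * ‖u‖ ≤ nrm u := by
    rcases subsingleton_or_nontrivial E with hE | hE
    · exact ⟨1, one_pos, fun u => by
        have : u = 0 := Subsingleton.elim u 0
        simp [this, h0]⟩
    · -- continuity of nrm
      have hcont : Continuous nrm := by
        obtain ⟨K, hK0, hKle⟩ : ∃ K : ℝ, 0 ≤ K ∧ ∀ u : E, nrm u ≤ K * ‖u‖ := by
          classical
          let b := Module.finBasis ℝ E
          let C : Fin (Module.finrank ℝ E) → ℝ := fun i =>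
            ‖(LinearMap.toContinuousLinearMap (b.coord i))‖ * nrm (b i)
          refine ⟨∑ i, C i, Finset.sum_nonneg fun i _ =>
            mul_nonneg (norm_nonneg _) (nrm_nonneg nrm hnrm_add hnrm_smul _), fun u => ?_⟩
          have hrepr : u = ∑ i, b.repr u i • b i := (b.sum_repr u).symm
          calc nrm u = nrm (∑ i, b.repr u i • b i) := by rw [← hrepr]
            _ ≤ ∑ i, nrm (b.repr u i • b i) := by
                refine Finset.le_sum_of_subadditive nrm ?_ hnrm_add _ _
                simpa using h0.le
            _ = ∑ i, |b.repr u i| * nrm (b i) := by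
                simp [hnrm_smul]
            _ ≤ ∑ i, C i * ‖u‖ := by
                refine Finset.sum_le_sum fun i _ => ?_
                have h1 : |b.repr u i| ≤ ‖(LinearMap.toContinuousLinearMap (b.coord i))‖ * ‖u‖ := by
                  have := (LinearMap.toContinuousLinearMap (b.coord i)).le_opNorm u
                  simpa using this
                have h2 : 0 ≤ nrm (b i) := nrm_nonneg nrm hnrm_add hnrm_smul _
                calc |b.repr u i| * nrm (b i)
                    ≤ (‖(LinearMap.toContinuousLinearMap (b.coord i))‖ * ‖u‖) * nrm (b i) :=
                      mul_le_mul_of_nonneg_right h1 h2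
                  _ = C i * ‖u‖ := by ring
            _ = (∑ i, C i) * ‖u‖ := by rw [Finset.sum_mul]
        have hlip : LipschitzWith (Real.toNNReal K) nrm := by
          refine LipschitzWith.of_dist_le_mul fun u v => ?_
          have h1 : nrm u ≤ nrm v + nrm (u - v) := by
            have := hnrm_add (u - v) v
            simp at this
            linarith
          have h2 : nrm v ≤ nrm u + nrm (u - v) := by
            have := hnrm_add (v - u) u
            have hneg : nrm (v - u) = nrm (u - v) := by
              have := hnrm_smul (-1) (u - v); simpa [neg_sub] using this
            simp [hneg] at this
            linarith [this]
          have h3 : |nrm u - nrm v| ≤ nrm (u - v) := abs_sub_le_iff.2 ⟨by linarith, by linarith⟩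
          have h4 : nrm (u - v) ≤ K * ‖u - v‖ := hKle _
          rw [Real.dist_eq, dist_eq_norm]
          calc |nrm u - nrm v| ≤ K * ‖u - v‖ := le_trans h3 h4
            _ ≤ (Real.toNNReal K) * ‖u - v‖ := by
                gcongr
                exact Real.le_coe_toNNReal K
        exact hlip.continuous
      have hsph : IsCompact (Metric.sphere (0:E) 1) := isCompact_sphere 0 1
      have hne : (Metric.sphere (0:E) 1).Nonempty := NormedSpace.sphere_nonempty.2 zero_le_one
      obtain ⟨u₀, hu₀, hmin⟩ := hsph.exists_isMinOn hne hcont.continuousOn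
      refine ⟨nrm u₀, ?_, fun u => ?_⟩
      · rcases lt_or_eq_of_le (nrm_nonneg nrm hnrm_add hnrm_smul u₀) with h | h
        · exact h
        · exfalso
          have : u₀ = 0 := (hnrm_zero u₀).1 h.symm
          rw [this] at hu₀
          simp at hu₀
      · rcases eq_or_ne u 0 with rfl | hu
        · simp [h0]
        · have hnu : ‖u‖ ≠ 0 := norm_ne_zero_iff.2 hu
          have hmem : (‖u‖⁻¹ • u) ∈ Metric.sphere (0:E) 1 := by
            simp [norm_smul, abs_of_nonneg (inv_nonneg.2 (norm_nonneg u)),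
              inv_mul_cancel₀ hnu]
          have hmm := hmin hmem
          have heq : nrm (‖u‖⁻¹ • u) = ‖u‖⁻¹ * nrm u := by
            rw [hnrm_smul _ u, abs_of_nonneg (inv_nonneg.2 (norm_nonneg u))]
          have this : nrm u₀ ≤ ‖u‖⁻¹ * nrm u := by rw [← heq]; exact hmm
          have hpos : 0 < ‖u‖ := norm_pos_iff.2 hu
          calc nrm u₀ * ‖u‖ ≤ (‖u‖⁻¹ * nrm u) * ‖u‖ :=
                mul_le_mul_of_nonneg_right this (norm_nonneg u)
            _ = nrm u := by field_simp
  -- bddAbove of the dual set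
  set S : Set ℝ := {r : ℝ | ∃ u : E, nrm u ≤ 1 ∧ r = ⟪ξ, u⟫} with hS
  have hbdd : BddAbove S := by
    refine ⟨‖ξ‖ * m⁻¹, fun r hr => ?_⟩
    obtain ⟨u, hu1, rfl⟩ := hr
    have h1 : m * ‖u‖ ≤ 1 := le_trans (hlow u) hu1
    have h2 : ‖u‖ ≤ m⁻¹ := by
      rw [inv_eq_one_div, le_div_iff₀ hm]
      linarith
    calc ⟪ξ, u⟫ ≤ ‖ξ‖ * ‖u‖ := real_inner_le_norm ξ u
      _ ≤ ‖ξ‖ * m⁻¹ := by gcongr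
  rcases eq_or_ne w 0 with rfl | hw
  · simp [h0]
  · have hnw : 0 < nrm w := by
      rcases lt_or_eq_of_le (nrm_nonneg nrm hnrm_add hnrm_smul w) with h | h
      · exact h
      · exact absurd ((hnrm_zero w).1 h.symm) hw
    have hmem : ⟪ξ, (nrm w)⁻¹ • w⟫ ∈ S := by
      refine ⟨(nrm w)⁻¹ • w, ?_, rfl⟩
      rw [hnrm_smul, abs_of_nonneg (inv_nonneg.2 hnw.le), inv_mul_cancel₀ hnw.ne']
    have hle : ⟪ξ, (nrm w)⁻¹ • w⟫ ≤ dnrm ξ := by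
      rw [hdnrm ξ]; exact le_csSup hbdd hmem
    rw [real_inner_smul_right] at hle
    calc ⟪ξ, w⟫ = (nrm w) * ((nrm w)⁻¹ * ⟪ξ, w⟫) := by field_simp
      _ ≤ (nrm w) * dnrm ξ := by gcongr
      _ = dnrm ξ * nrm w := by ring
end aux

section aux2
variable {E : Type*} [NormedAddCommGroup E] [InnerProductSpace ℝ E]

lemma ri_char {Y : Set E} {w : E} (hw : w ∈ intrinsicInterior ℝ Y) :
    ∃ ε > 0, ∀ z ∈ (affineSpan ℝ Y : Set E), dist z w < ε → z ∈ Y := by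
  obtain ⟨y, hy, rfl⟩ := mem_intrinsicInterior.1 hw
  have hmem : ((↑) ⁻¹' Y : Set <| affineSpan ℝ Y) ∈ nhds y := mem_interior_iff_mem_nhds.1 hy
  rw [nhds_subtype] at hmem
  obtain ⟨t, ht, hts⟩ := hmem
  obtain ⟨ε, hε, hball⟩ := Metric.mem_nhds_iff.1 ht
  refine ⟨ε, hε, fun z hz hdz => ?_⟩
  have : (⟨z, hz⟩ : affineSpan ℝ Y) ∈ ((↑) ⁻¹' t : Set <| affineSpan ℝ Y) := by
    exact hball (by simpa [Metric.mem_ball] using hdz)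
  exact hts this

lemma seg_char {Y : Set E} (hYcv : Convex ℝ Y) {x w : E} (hx : x ∈ Y) (hw : w ∈ Y) {ε : ℝ}
    (hchar : ∀ z ∈ (affineSpan ℝ Y : Set E), dist z w < ε → z ∈ Y) {t : ℝ}
    (ht0 : 0 < t) (ht1 : t ≤ 1) :
    ∀ z ∈ (affineSpan ℝ Y : Set E), dist z (x + t • (w - x)) < t * ε → z ∈ Y := by
  intro z hz hdz
  have hxA : x ∈ affineSpan ℝ Y := subset_affineSpan ℝ Y hx
  have hwA : w ∈ affineSpan ℝ Y := subset_affineSpan ℝ Y hw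
  have hyA : x + t • (w - x) ∈ affineSpan ℝ Y := by
    have := AffineSubspace.smul_vsub_vadd_mem (affineSpan ℝ Y) t hwA hxA hxA
    simpa [vsub_eq_sub, vadd_eq_add, add_comm] using this
  set v : E := z - (x + t • (w - x)) with hv
  have hvdir : v ∈ (affineSpan ℝ Y).direction :=
    AffineSubspace.vsub_mem_direction hz hyA
  have hz' : w + t⁻¹ • v ∈ affineSpan ℝ Y := by
    have : t⁻¹ • v ∈ (affineSpan ℝ Y).direction := Submodule.smul_mem _ _ hvdir
    simpa [vadd_eq_add, add_comm] using AffineSubspace.vadd_mem_of_mem_direction this hwA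
  have hz'Y : w + t⁻¹ • v ∈ Y := by
    refine hchar _ hz' ?_
    have : dist (w + t⁻¹ • v) w = ‖t⁻¹ • v‖ := by
      simp [dist_eq_norm]
    rw [this, norm_smul]
    have hnv : ‖v‖ < t * ε := by
      simpa [hv, dist_eq_norm] using hdz
    rw [Real.norm_eq_abs, abs_of_nonneg (inv_nonneg.2 ht0.le)]
    calc t⁻¹ * ‖v‖ < t⁻¹ * (t * ε) := by
          exact mul_lt_mul_of_pos_left hnv (inv_pos.2 ht0)
      _ = ε := by field_simp
  have hcomb := hYcv hx hz'Y (by linarith : (0:ℝ) ≤ 1 - t) ht0.le (by ring)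
  have : (1 - t) • x + t • (w + t⁻¹ • v) = z := by
    have ht : t ≠ 0 := ht0.ne'
    rw [smul_add, smul_smul, mul_inv_cancel₀ ht]
    rw [hv] at *
    module
  rwa [this] at hcomb
end aux2

section mainaux
set_option maxHeartbeats 1000000

lemma eps_trick {A B : ℝ} (h : ∀ θ : ℝ, 0 < θ → θ ≤ 1 → 0 ≤ A + θ * B) : 0 ≤ A := by
  by_contra hA
  push_neg at hA
  set θ : ℝ := min 1 (-A / (2 * (|B| + 1))) with hθ
  have hB1 : (0:ℝ) < |B| + 1 := by positivity
  have hθ0 : 0 < θ := lt_min one_pos (div_pos (by linarith) (by positivity))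
  have h2 := h θ hθ0 (min_le_left _ _)
  have h3 : θ * B ≤ θ * |B| := mul_le_mul_of_nonneg_left (le_abs_self B) hθ0.le
  have h4 : θ * |B| ≤ (-A / (2 * (|B| + 1))) * (|B| + 1) := by
    refine mul_le_mul (min_le_right _ _) (by linarith) (abs_nonneg B) ?_
    exact le_of_lt (div_pos (by linarith) (by positivity))
  have h5 : (-A / (2 * (|B| + 1))) * (|B| + 1) = -A / 2 := by
    field_simp
  linarith

lemma tseq_facts : ∀ n : ℕ, 0 < (1:ℝ)/(n+1) ∧ (1:ℝ)/(n+1) ≤ 1 := by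
  intro n
  constructor
  · positivity
  · rw [div_le_one (by positivity)]
    have : (0:ℝ) ≤ n := Nat.cast_nonneg n
    linarith
end mainaux
set_option maxHeartbeats 1000000

section aux3
variable {E : Type*} [NormedAddCommGroup E] [InnerProductSpace ℝ E] [FiniteDimensional ℝ E]

lemma subgrad_exists {Y : Set E} (hYcv : Convex ℝ Y) {ω : E → ℝ}
    (hωcont : ContinuousOn ω Y) (hωconv : ConvexOn ℝ Y ω) {x : E} (hx : x ∈ Y) {ε : ℝ}
    (hε : 0 < ε) (hchar : ∀ z ∈ (affineSpan ℝ Y : Set E), dist z x < ε → z ∈ Y) :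
    ∃ s : E, ∀ z ∈ Y, ω x + ⟪s, z - x⟫ ≤ ω z := by
  classical
  set V := (affineSpan ℝ Y).direction with hV
  have hxA : x ∈ affineSpan ℝ Y := subset_affineSpan ℝ Y hx
  -- points x + v for small v in V are in Y
  have hmemY : ∀ v : V, ‖v‖ < ε → x + (v : E) ∈ Y := by
    intro v hv
    refine hchar _ ?_ ?_
    · simpa [add_comm] using AffineSubspace.vadd_mem_of_mem_direction v.2 hxA
    · simpa [dist_eq_norm] using hv
  set φ : V → ℝ := fun v => ω (x + (v : E)) with hφ
  set O : Set (V × ℝ) := {q : V × ℝ | ‖q.1‖ < ε ∧ φ q.1 < q.2} with hO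
  have hOopen : IsOpen O := by
    have hcont : ContinuousOn (fun q : V × ℝ => q.2 - φ q.1)
        (Metric.ball (0 : V) ε ×ˢ (Set.univ : Set ℝ)) := by
      apply ContinuousOn.sub
      · exact continuous_snd.continuousOn
      · refine ContinuousOn.comp hωcont ?_ ?_
        · exact (continuous_const.add (continuous_subtype_val.comp continuous_fst)).continuousOn
        · intro q hq
          exact hmemY q.1 (by simpa using hq.1)
    have : O = (Metric.ball (0 : V) ε ×ˢ (Set.univ : Set ℝ)) ∩
        ((fun q : V × ℝ => q.2 - φ q.1) ⁻¹' Set.Ioi 0) := by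
      ext q
      simp [hO, Metric.mem_ball, sub_pos, and_comm]
    rw [this]
    exact hcont.isOpen_inter_preimage (Metric.isOpen_ball.prod isOpen_univ) isOpen_Ioi
  have hφconv : ∀ (v₁ v₂ : V) (a b : ℝ), ‖v₁‖ < ε → ‖v₂‖ < ε → 0 ≤ a → 0 ≤ b → a + b = 1 →
      φ (a • v₁ + b • v₂) ≤ a * φ v₁ + b * φ v₂ := by
    intro v₁ v₂ a b h1 h2 ha hb hab
    have e1 : x + ((a • v₁ + b • v₂ : V) : E) = a • (x + (v₁ : E)) + b • (x + (v₂ : E)) := by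
      push_cast
      have hx1 : x = (1:ℝ) • x := (one_smul ℝ x).symm
      calc x + (a • (v₁:E) + b • (v₂:E)) = (a + b) • x + (a • (v₁:E) + b • (v₂:E)) := by
            rw [hab, one_smul]
        _ = a • (x + (v₁ : E)) + b • (x + (v₂ : E)) := by
            rw [add_smul, smul_add, smul_add]
            abel
    have := hωconv.2 (hmemY v₁ h1) (hmemY v₂ h2) ha hb hab
    rw [hφ]
    simp only
    rw [e1]
    exact this
  have hOconv : Convex ℝ O := by
    rintro ⟨v₁, r₁⟩ ⟨h11, h12⟩ ⟨v₂, r₂⟩ ⟨h21, h22⟩ a b ha hb hab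
    rcases eq_or_lt_of_le ha with rfl | ha'
    · simp at hab
      subst hab
      simpa using ⟨h21, h22⟩
    rcases eq_or_lt_of_le hb with rfl | hb'
    · simp at hab
      subst hab
      simpa using ⟨h11, h12⟩
    constructor
    · show ‖a • v₁ + b • v₂‖ < ε
      calc ‖a • v₁ + b • v₂‖ ≤ a * ‖v₁‖ + b * ‖v₂‖ := by
            refine le_trans (norm_add_le _ _) ?_
            rw [norm_smul, norm_smul, Real.norm_eq_abs, Real.norm_eq_abs,
              abs_of_nonneg ha, abs_of_nonneg hb]
        _ < a * ε + b * ε := by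
            exact add_lt_add (mul_lt_mul_of_pos_left h11 ha') (mul_lt_mul_of_pos_left h21 hb')
        _ = ε := by rw [← add_mul, hab, one_mul]
    · show φ (a • v₁ + b • v₂) < a * r₁ + b * r₂
      calc φ (a • v₁ + b • v₂) ≤ a * φ v₁ + b * φ v₂ := hφconv _ _ _ _ h11 h21 ha hb hab
        _ < a * r₁ + b * r₂ :=
            add_lt_add (mul_lt_mul_of_pos_left h12 ha') (mul_lt_mul_of_pos_left h22 hb')
  have hnotmem : ((0 : V), ω x) ∉ O := by
    intro h
    have : φ 0 < ω x := h.2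
    simp [hφ] at this
  obtain ⟨f, hf⟩ := geometric_hahn_banach_open_point hOconv hOopen hnotmem
  -- decompose f
  set c : ℝ := f ((0 : V), (1 : ℝ)) with hc
  have hsplit : ∀ (v : V) (r : ℝ), f (v, r) = f (v, 0) + r * c := by
    intro v r
    have : (v, r) = (v, (0:ℝ)) + r • ((0 : V), (1:ℝ)) := by
      simp [Prod.ext_iff]
    rw [this, map_add, map_smul]
    simp [hc, smul_eq_mul]
  have hfx : f ((0 : V), ω x) = ω x * c := by
    have := hsplit 0 (ω x)
    rw [show f ((0:V), (0:ℝ)) = 0 by rw [Prod.mk_zero_zero, map_zero], zero_add] at this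
    simpa using this
  have hcneg : c < 0 := by
    have hmem : ((0 : V), ω x + 1) ∈ O := by
      constructor
      · simpa using hε
      · simp [hφ]
    have := hf _ hmem
    rw [hsplit 0 (ω x + 1), hfx] at this
    rw [show f ((0:V), (0:ℝ)) = 0 by rw [Prod.mk_zero_zero, map_zero], zero_add] at this
    nlinarith
  -- local subgradient inequality
  have hlocal : ∀ v : V, ‖v‖ < ε → f (v, 0) + φ v * c ≤ ω x * c := by
    intro v hv
    by_contra hcon
    push_neg at hcon
    set δ : ℝ := (f (v, 0) + φ v * c - ω x * c) / (-c) with hδ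
    have hδpos : 0 < δ := div_pos (by linarith) (by linarith)
    have hmem : (v, φ v + δ) ∈ O := by
      refine ⟨hv, ?_⟩
      show φ v < φ v + δ
      linarith
    have := hf _ hmem
    rw [hsplit v (φ v + δ), hfx] at this
    have hδc : δ * (-c) = f (v, 0) + φ v * c - ω x * c := by
      rw [hδ, div_mul_cancel₀]
      linarith
    nlinarith
  -- the linear functional and its Riesz representative
  set L : V →L[ℝ] ℝ := (-c)⁻¹ • (f.comp (ContinuousLinearMap.inl ℝ V ℝ)) with hL
  set ζ : V := (InnerProductSpace.toDual ℝ V).symm L with hζ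
  have hζv : ∀ v : V, ⟪ζ, v⟫ = (-c)⁻¹ * f (v, 0) := by
    intro v
    have := InnerProductSpace.toDual_symm_apply (𝕜 := ℝ) (E := V) (x := v) (y := L)
    rw [hζ, this, hL]
    simp [ContinuousLinearMap.smul_apply, smul_eq_mul]
  refine ⟨(ζ : E), fun z hz => ?_⟩
  -- global inequality from local one by convexity
  have hzA : z ∈ affineSpan ℝ Y := subset_affineSpan ℝ Y hz
  set v : V := ⟨z - x, AffineSubspace.vsub_mem_direction hzA hxA⟩ with hvdef
  set t : ℝ := min 1 (ε / (2 * (‖v‖ + 1))) with ht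
  have hvnn : (0:ℝ) ≤ ‖v‖ := norm_nonneg _
  have ht0 : 0 < t := lt_min one_pos (by positivity)
  have ht1 : t ≤ 1 := min_le_left _ _
  have htv : ‖t • v‖ < ε := by
    rw [norm_smul, Real.norm_eq_abs, abs_of_nonneg ht0.le]
    calc t * ‖v‖ ≤ (ε / (2 * (‖v‖ + 1))) * ‖v‖ :=
          mul_le_mul_of_nonneg_right (min_le_right _ _) hvnn
      _ < ε := by
          rw [div_mul_eq_mul_div, div_lt_iff₀ (by positivity)]
          nlinarith
  have hloc := hlocal (t • v) htv
  -- φ (t • v) ≤ ω x + t * (ω z - ω x)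
  have hcomb : x + ((t • v : V) : E) = (1 - t) • x + t • z := by
    push_cast [hvdef]
    rw [smul_sub]
    module
  have hφle : φ (t • v) ≤ (1 - t) * ω x + t * ω z := by
    rw [hφ]
    simp only
    rw [hcomb]
    exact hωconv.2 hx hz (by linarith) ht0.le (by ring)
  -- from hloc : f (t•v, 0) + φ (t•v) * c ≤ ω x * c
  -- f (t•v, 0) = t * f(v, 0) ; and ⟪ζ, v⟫ = (-c)⁻¹ f(v,0)
  have hft : f ((t • v : V), (0:ℝ)) = t * f (v, 0) := by
    have : ((t • v : V), (0:ℝ)) = t • ((v : V), (0:ℝ)) := by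
      simp [Prod.ext_iff]
    rw [this, map_smul, smul_eq_mul]
  have hinner : ⟪(ζ : E), z - x⟫ = (-c)⁻¹ * f (v, 0) := by
    have : ⟪(ζ : E), z - x⟫ = ⟪ζ, v⟫ := by
      rw [Submodule.coe_inner]
    rw [this, hζv]
  -- combine : t * f(v,0) ≤ (ω x - φ(t•v)) * (-c) ... then divide
  have hkey : t * f (v, 0) ≤ (φ (t • v) - ω x) * (-c) := by
    rw [← hft]
    nlinarith [hloc]
  have hkey2 : t * f (v, 0) ≤ ((1 - t) * ω x + t * ω z - ω x) * (-c) := by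
    refine le_trans hkey ?_
    have h1 : φ (t • v) - ω x ≤ (1 - t) * ω x + t * ω z - ω x := by linarith
    nlinarith
  have hc' : (0:ℝ) < -c := by linarith
  have : (-c)⁻¹ * f (v, 0) ≤ ω z - ω x := by
    have h2 : ((1 - t) * ω x + t * ω z - ω x) = t * (ω z - ω x) := by ring
    rw [h2] at hkey2
    have h3 : f (v, 0) ≤ (ω z - ω x) * (-c) := by
      have h4 : t * f (v, 0) ≤ t * ((ω z - ω x) * (-c)) := by
        calc t * f (v, 0) ≤ t * (ω z - ω x) * (-c) := hkey2
          _ = t * ((ω z - ω x) * (-c)) := by ring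
      exact le_of_mul_le_mul_left h4 ht0
    calc (-c)⁻¹ * f (v, 0) ≤ (-c)⁻¹ * ((ω z - ω x) * (-c)) := by
          exact mul_le_mul_of_nonneg_left h3 (inv_nonneg.2 hc'.le)
      _ = ω z - ω x := by
          field_simp
          exact mul_div_cancel_left₀ _ hcneg.ne
  rw [hinner]
  linarith
end aux3

lemma bregman_half {E : Type*} [NormedAddCommGroup E] [InnerProductSpace ℝ E]
    {Y Yo : Set E} (hYoY : Yo ⊆ Y)
    (nrm : E → ℝ)
    (hnrm_smul : ∀ (c : ℝ) (u : E), nrm (c • u) = |c| * nrm u)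
    {ω : E → ℝ} {ω' : E → E}
    (hω'sub : ∀ y ∈ Yo, ∀ z ∈ Y, ω y + ⟪ω' y, z - y⟫ ≤ ω z)
    (hstrong : ∀ y ∈ Yo, ∀ y' ∈ Yo, nrm (y - y') ^ 2 ≤ ⟪ω' y - ω' y', y - y'⟫)
    {A B : E} (hAB : ∀ r : ℝ, 0 ≤ r → r ≤ 1 → A + r • (B - A) ∈ Yo) :
    nrm (B - A) ^ 2 / 2 ≤ ω B - ω A - ⟪ω' A, B - A⟫ := by
  set n : ℝ := nrm (B - A) with hn
  set D : ℝ := ω B - ω A - ⟪ω' A, B - A⟫ with hD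
  have hAYo : A ∈ Yo := by simpa using hAB 0 le_rfl zero_le_one
  have key : ∀ N : ℕ, 1 ≤ N → n ^ 2 * ((N : ℝ) - 1) / (2 * N) ≤ D := by
    intro N hN
    have hNpos : (0:ℝ) < N := by exact_mod_cast hN
    set x : ℕ → E := fun k => A + ((k : ℝ)/N) • (B - A) with hx
    have hx0 : x 0 = A := by simp [hx]
    have hxN : x N = B := by
      rw [hx]
      simp only
      rw [div_self hNpos.ne', one_smul]
      module
    have hxYo : ∀ k : ℕ, k ≤ N → x k ∈ Yo := by
      intro k hk
      refine hAB _ (by positivity) ?_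
      rw [div_le_one hNpos]
      exact_mod_cast hk
    have hstep : ∀ k ∈ Finset.range N,
        (1/(N:ℝ)) * (⟪ω' A, B - A⟫ + ((k:ℝ)/N) * n^2) ≤ ω (x (k+1)) - ω (x k) := by
      intro k hk
      have hkN : k < N := Finset.mem_range.1 hk
      have hkYo : x k ∈ Yo := hxYo k hkN.le
      have hk1Y : x (k+1) ∈ Y := hYoY (hxYo (k+1) hkN)
      have hsub := hω'sub (x k) hkYo (x (k+1)) hk1Y
      have hdiff : x (k+1) - x k = (1/(N:ℝ)) • (B - A) := by
        rw [hx]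
        simp only
        push_cast
        match_scalars <;> ring
      have hinner1 : ⟪ω' (x k), x (k+1) - x k⟫ = (1/(N:ℝ)) * ⟪ω' (x k), B - A⟫ := by
        rw [hdiff, real_inner_smul_right]
      have hstep2 : ⟪ω' A, B - A⟫ + ((k:ℝ)/N) * n^2 ≤ ⟪ω' (x k), B - A⟫ := by
        rcases Nat.eq_zero_or_pos k with rfl | hkpos
        · rw [hx0] at *
          simp
        · have hkr : (0:ℝ) < (k:ℝ)/N := by positivity
          have hst := hstrong (x k) hkYo A hAYo
          have hxkA : x k - A = ((k:ℝ)/N) • (B - A) := by rw [hx]; module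
          have hnrm1 : nrm (x k - A) = ((k:ℝ)/N) * n := by
            rw [hxkA, hnrm_smul, abs_of_nonneg hkr.le]
          have hinn : ⟪ω' (x k) - ω' A, x k - A⟫
              = ((k:ℝ)/N) * ⟪ω' (x k) - ω' A, B - A⟫ := by
            rw [hxkA, real_inner_smul_right]
          rw [hnrm1, hinn, mul_pow] at hst
          have h2 : ((k:ℝ)/N) * n^2 ≤ ⟪ω' (x k) - ω' A, B - A⟫ := by
            have h4 : ((k:ℝ)/N) * (((k:ℝ)/N) * n^2)
                ≤ ((k:ℝ)/N) * ⟪ω' (x k) - ω' A, B - A⟫ := by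
              calc ((k:ℝ)/N) * (((k:ℝ)/N) * n^2) = ((k:ℝ)/N)^2 * n^2 := by ring
                _ ≤ ((k:ℝ)/N) * ⟪ω' (x k) - ω' A, B - A⟫ := hst
            exact le_of_mul_le_mul_left h4 hkr
          rw [inner_sub_left] at h2
          linarith
      rw [hinner1] at hsub
      have h3 : (1/(N:ℝ)) * (⟪ω' A, B - A⟫ + ((k:ℝ)/N) * n^2)
          ≤ (1/(N:ℝ)) * ⟪ω' (x k), B - A⟫ :=
        mul_le_mul_of_nonneg_left hstep2 (by positivity)
      linarith
    have hsum := Finset.sum_le_sum hstep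
    rw [Finset.sum_range_sub (fun k => ω (x k))] at hsum
    rw [hx0, hxN] at hsum
    have hsumval : ∑ k ∈ Finset.range N, (1/(N:ℝ)) * (⟪ω' A, B - A⟫ + ((k:ℝ)/N) * n^2)
        = ⟪ω' A, B - A⟫ + n^2 * ((N:ℝ) - 1) / (2 * N) := by
      have hgauss : ∑ k ∈ Finset.range N, (k:ℝ) = (N:ℝ) * ((N:ℝ) - 1) / 2 := by
        have h2 : ((∑ i ∈ Finset.range N, i) * 2 : ℕ) = N * (N - 1) :=
          Finset.sum_range_id_mul_two N
        have h3 := congrArg (Nat.cast : ℕ → ℝ) h2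
        push_cast [Nat.cast_sub hN] at h3
        linarith
      calc ∑ k ∈ Finset.range N, (1/(N:ℝ)) * (⟪ω' A, B - A⟫ + ((k:ℝ)/N) * n^2)
          = ∑ k ∈ Finset.range N, ((1/(N:ℝ)) * ⟪ω' A, B - A⟫ + (k:ℝ) * (n^2/(N:ℝ)^2)) := by
            refine Finset.sum_congr rfl fun k _ => ?_
            field_simp
        _ = (N:ℝ) * ((1/(N:ℝ)) * ⟪ω' A, B - A⟫)
            + ((N:ℝ)*((N:ℝ)-1)/2) * (n^2/(N:ℝ)^2) := by
            rw [Finset.sum_add_distrib, Finset.sum_const, Finset.card_range,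
              ← Finset.sum_mul, hgauss]
            simp [nsmul_eq_mul]
        _ = ⟪ω' A, B - A⟫ + n^2 * ((N:ℝ) - 1) / (2 * N) := by
            field_simp
    rw [hsumval] at hsum
    linarith
  have h1 : Filter.Tendsto (fun N : ℕ => (1:ℝ)/N) Filter.atTop (nhds 0) :=
    tendsto_one_div_atTop_nhds_zero_nat
  have hlim : Filter.Tendsto (fun N : ℕ => n^2*((N:ℝ)-1)/(2*N)) Filter.atTop (nhds (n^2/2)) := by
    have h2 : Filter.Tendsto (fun N : ℕ => n^2/2 - (n^2/2) * ((1:ℝ)/N))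
        Filter.atTop (nhds (n^2/2 - (n^2/2) * 0)) :=
      Filter.Tendsto.sub tendsto_const_nhds (Filter.Tendsto.mul tendsto_const_nhds h1)
    have heq : ∀ᶠ N : ℕ in Filter.atTop,
        n^2/2 - (n^2/2) * ((1:ℝ)/N) = n^2*((N:ℝ)-1)/(2*N) := by
      rw [Filter.eventually_atTop]
      refine ⟨1, fun N hN => ?_⟩
      have hNpos : (0:ℝ) < N := by exact_mod_cast hN
      field_simp
    have := Filter.Tendsto.congr' heq h2
    simpa using this
  refine le_of_tendsto hlim ?_
  rw [Filter.eventually_atTop]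
  exact ⟨1, fun N hN => key N hN⟩

set_option maxHeartbeats 2000000 in
/-- Key per-step Bregman-distance decrease in the MDL method: with affine functions
`h_τ(z) = ⟨g_τ, y_τ − z⟩`, `‖g_τ‖_* ≤ L`, level set `U = {y ∈ Y : h_τ(y) ≥ ℓ ∀τ ∈ I}`
intersecting the relative interior of `Y`, a point `ŷ ∈ Y°` with `h_τ(ŷ) ≤ 0` for some
`τ ∈ I`, and `y_+ = argmin_{y∈U}[ω(y) − ⟨ω'(ŷ), y⟩]`, one has `‖ŷ − y_+‖ ≥ ℓ/L` and
`V_{y_+}(u) ≤ V_ŷ(u) − ℓ²/(2L²)` for every `u ∈ U`. -/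
theorem stmt12
    {E : Type*} [NormedAddCommGroup E] [InnerProductSpace ℝ E] [FiniteDimensional ℝ E]
    (Y : Set E) (hYne : Y.Nonempty) (hYcl : IsClosed Y)
    (hYbd : Bornology.IsBounded Y) (hYcv : Convex ℝ Y)
    (nrm : E → ℝ)
    (hnrm_add : ∀ u v, nrm (u + v) ≤ nrm u + nrm v)
    (hnrm_smul : ∀ (c : ℝ) (u : E), nrm (c • u) = |c| * nrm u)
    (hnrm_zero : ∀ u, nrm u = 0 ↔ u = 0)
    (dnrm : E → ℝ)
    (hdnrm : ∀ ξ : E, dnrm ξ = sSup {r : ℝ | ∃ u : E, nrm u ≤ 1 ∧ r = ⟪ξ, u⟫})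
    (ω : E → ℝ) (hωcont : ContinuousOn ω Y) (hωconv : ConvexOn ℝ Y ω)
    (Yo : Set E) (hYo : Yo = {y ∈ Y | ∃ s : E, ∀ z ∈ Y, ω y + ⟪s, z - y⟫ ≤ ω z})
    (ω' : E → E)
    (hω'sub : ∀ y ∈ Yo, ∀ z ∈ Y, ω y + ⟪ω' y, z - y⟫ ≤ ω z)
    (hω'cont : ContinuousOn ω' Yo)
    (hstrong : ∀ y ∈ Yo, ∀ y' ∈ Yo, nrm (y - y') ^ 2 ≤ ⟪ω' y - ω' y', y - y'⟫)
    -- the data of the level set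
    (I : Finset ℕ) (g : ℕ → E) (yp : ℕ → E) (L : ℝ)
    (hg : ∀ τ ∈ I, dnrm (g τ) ≤ L) (hyp : ∀ τ ∈ I, yp τ ∈ Y)
    (ℓ : ℝ) (hℓ : 0 < ℓ)
    (U : Set E) (hU : U = {z ∈ Y | ∀ τ ∈ I, ℓ ≤ ⟪g τ, yp τ - z⟫})
    (hUri : (U ∩ intrinsicInterior ℝ Y).Nonempty)
    (yhat : E) (hyhat : yhat ∈ Yo)
    (hone : ∃ τ ∈ I, ⟪g τ, yp τ - yhat⟫ ≤ 0)
    (yplus : E) (hyplusU : yplus ∈ U)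
    (hyplusmin : IsMinOn (fun z => ω z - ⟪ω' yhat, z⟫) U yplus) :
    ℓ / L ≤ nrm (yhat - yplus) ∧
      ∀ u ∈ U,
        ω u - ω yplus - ⟪ω' yplus, u - yplus⟫ ≤
          (ω u - ω yhat - ⟪ω' yhat, u - yhat⟫) - ℓ ^ 2 / (2 * L ^ 2) := by
  classical
  have hnn : ∀ u, 0 ≤ nrm u := nrm_nonneg nrm hnrm_add hnrm_smul
  have hpair : ∀ ξ v, ⟪ξ, v⟫ ≤ dnrm ξ * nrm v :=
    nrm_dual_pair nrm hnrm_add hnrm_smul hnrm_zero dnrm hdnrm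
  -- basic memberships
  have hYoY : Yo ⊆ Y := by rw [hYo]; exact fun y hy => hy.1
  have hyhatY : yhat ∈ Y := hYoY hyhat
  have hUsub : U ⊆ Y := by rw [hU]; exact fun z hz => hz.1
  have hyplusY : yplus ∈ Y := hUsub hyplusU
  ------------------------------------------------------------------
  -- PART A
  obtain ⟨τ, hτI, hτ⟩ := hone
  have hlev : ℓ ≤ ⟪g τ, yp τ - yplus⟫ := by
    rw [hU] at hyplusU; exact hyplusU.2 τ hτI
  have hyplusU : yplus ∈ U := hyplusU
  have hdiff : ℓ ≤ ⟪g τ, yhat - yplus⟫ := by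
    have he : ⟪g τ, yhat - yplus⟫ = ⟪g τ, yp τ - yplus⟫ - ⟪g τ, yp τ - yhat⟫ := by
      rw [← inner_sub_right]
      congr 1
      abel
    linarith
  have hLn : ℓ ≤ L * nrm (yhat - yplus) := by
    have h1 := hpair (g τ) (yhat - yplus)
    have h2 : dnrm (g τ) * nrm (yhat - yplus) ≤ L * nrm (yhat - yplus) :=
      mul_le_mul_of_nonneg_right (hg τ hτI) (hnn _)
    linarith
  have hL : 0 < L := by
    by_contra hcon
    push_neg at hcon
    nlinarith [hnn (yhat - yplus)]
  have hnpos : 0 < nrm (yhat - yplus) := by nlinarith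
  have hA : ℓ / L ≤ nrm (yhat - yplus) := by
    rw [div_le_iff₀ hL]
    nlinarith
  ------------------------------------------------------------------
  -- infrastructure for PART B
  have hUcv : Convex ℝ U := by
    rw [hU]
    intro z1 hz1 z2 hz2 a b ha hb hab
    refine ⟨hYcv hz1.1 hz2.1 ha hb hab, fun σ hσ => ?_⟩
    have h1 := hz1.2 σ hσ
    have h2 := hz2.2 σ hσ
    have he : ⟪g σ, yp σ - (a • z1 + b • z2)⟫
        = a * ⟪g σ, yp σ - z1⟫ + b * ⟪g σ, yp σ - z2⟫ := by
      have hyy : yp σ - (a • z1 + b • z2) = a • (yp σ - z1) + b • (yp σ - z2) := by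
        calc yp σ - (a • z1 + b • z2) = (a + b) • yp σ - (a • z1 + b • z2) := by
              rw [hab, one_smul]
          _ = a • (yp σ - z1) + b • (yp σ - z2) := by
              rw [add_smul, smul_sub, smul_sub]; abel
      rw [hyy, inner_add_right, real_inner_smul_right, real_inner_smul_right]
    rw [he]
    nlinarith
  obtain ⟨w, hwU, hwri⟩ := hUri
  obtain ⟨ε, hε, hwchar⟩ := ri_char hwri
  have hwY : w ∈ Y := hUsub hwU
  have hYcomp : IsCompact Y := Metric.isCompact_of_isClosed_isBounded hYcl hYbd
  obtain ⟨M₀, hM₀⟩ := hYcomp.exists_bound_of_continuousOn hωcont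
  set s : E := ω' yhat with hs
  have hmin : ∀ z ∈ U, ω yplus - ⟪s, yplus⟫ ≤ ω z - ⟪s, z⟫ := fun z hz => hyplusmin hz
  set V := (affineSpan ℝ Y).direction with hV
  -- the key segment construction
  have hseg : ∀ q ∈ U, ∀ εq : ℝ, 0 < εq →
      (∀ z ∈ (affineSpan ℝ Y : Set E), dist z q < εq → z ∈ Y) →
      ∀ t : ℝ, 0 < t → t ≤ 1 →
        (yplus + t • (q - yplus)) ∈ U ∧ (yplus + t • (q - yplus)) ∈ Yo ∧
        ⟪s, q - yplus⟫ ≤ ⟪ω' (yplus + t • (q - yplus)), q - yplus⟫ ∧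
        ω yplus + t * ⟪s, q - yplus⟫ ≤ ω (yplus + t • (q - yplus)) := by
    intro q hqU εq hεq hqchar t ht0 ht1
    set y := yplus + t • (q - yplus) with hy
    have hyU : y ∈ U := by
      have hcomb := hUcv hyplusU hqU (by linarith : (0:ℝ) ≤ 1 - t) ht0.le (by ring)
      have he : (1 - t) • yplus + t • q = y := by rw [hy]; module
      rwa [he] at hcomb
    have hyY : y ∈ Y := hUsub hyU
    have hychar := seg_char hYcv hyplusY (hUsub hqU) hqchar ht0 ht1
    obtain ⟨σ, hσ⟩ := subgrad_exists hYcv hωcont hωconv hyY (mul_pos ht0 hεq) hychar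
    have hyYo : y ∈ Yo := by rw [hYo]; exact ⟨hyY, σ, hσ⟩
    have hm := hmin y hyU
    have hsy : ⟪s, y⟫ = ⟪s, yplus⟫ + t * ⟪s, q - yplus⟫ := by
      rw [hy, inner_add_right, real_inner_smul_right]
    have h4 : ω yplus + t * ⟪s, q - yplus⟫ ≤ ω y := by
      rw [hsy] at hm; linarith
    have h5 := hω'sub y hyYo yplus hyplusY
    have h6 : ⟪ω' y, yplus - y⟫ = -(t * ⟪ω' y, q - yplus⟫) := by
      have he : yplus - y = (-t) • (q - yplus) := by rw [hy]; module
      rw [he, real_inner_smul_right]; ring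
    rw [h6] at h5
    have h7 : t * ⟪s, q - yplus⟫ ≤ t * ⟪ω' y, q - yplus⟫ := by linarith
    exact ⟨hyU, hyYo, le_of_mul_le_mul_left h7 ht0, h4⟩
  -- the sequence going to yplus along direction w
  set tq : ℕ → ℝ := fun n => (1:ℝ)/(n+1) with htq
  have htq0 : ∀ n, 0 < tq n := fun n => (tseq_facts n).1
  have htq1 : ∀ n, tq n ≤ 1 := fun n => (tseq_facts n).2
  have htqlim : Filter.Tendsto tq Filter.atTop (nhds 0) := by
    rw [htq]
    exact tendsto_one_div_add_atTop_nhds_zero_nat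
  ------------------------------------------------------------------
  -- yplus ∈ Yo
  have hpYo : yplus ∈ Yo := by
    set yq : ℕ → E := fun n => yplus + tq n • (w - yplus) with hyq
    have hq := fun n => hseg w hwU ε hε hwchar (tq n) (htq0 n) (htq1 n)
    set aq : ℕ → E := fun n => ((V.orthogonalProjectionOnto (ω' (yq n))) : E) with haq
    have haqV : ∀ n, aq n ∈ V := fun n => (V.orthogonalProjectionOnto (ω' (yq n))).2
    have haqinner : ∀ n, ∀ v ∈ V, ⟪ω' (yq n), v⟫ = ⟪aq n, v⟫ := by
      intro n v hv
      have horth := V.sub_starProjection_mem_orthogonal (ω' (yq n))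
      have h0 : ⟪ω' (yq n) - aq n, v⟫ = 0 := by
        rw [real_inner_comm]
        exact (Submodule.mem_orthogonal V _).1 horth v hv
      rw [inner_sub_left] at h0
      linarith
    -- uniform bound on aq
    set M' : ℝ := 2 * M₀ + |⟪s, w - yplus⟫| with hM'
    have hM'nn : 0 ≤ M' := by
      have := abs_nonneg (⟪s, w - yplus⟫)
      have h0 : 0 ≤ M₀ := le_trans (norm_nonneg _) (hM₀ w hwY)
      rw [hM']; linarith
    have haqbound : ∀ n, ‖aq n‖ ≤ 2 * M' / ε + 1 := by
      intro n
      have hbnd : ∀ v : E, v ∈ V → ‖v‖ < ε → ⟪aq n, v⟫ ≤ M' := by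
        intro v hvV hvnorm
        have hwvY : w + v ∈ Y := by
          refine hwchar _ ?_ ?_
          · have hwA : w ∈ affineSpan ℝ Y := subset_affineSpan ℝ Y hwY
            simpa [add_comm] using AffineSubspace.vadd_mem_of_mem_direction hvV hwA
          · simpa [dist_eq_norm] using hvnorm
        have hsub := hω'sub (yq n) (hq n).2.1 (w + v) hwvY
        have hyqY : yq n ∈ Y := hUsub (hq n).1
        have hM1 : ω (w + v) - ω (yq n) ≤ 2 * M₀ := by
          have b1 := hM₀ (w + v) hwvY
          have b2 := hM₀ (yq n) hyqY
          rw [Real.norm_eq_abs] at b1 b2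
          have := abs_le.1 b1
          have := abs_le.1 b2
          cases' abs_le.1 b1 with b1a b1b
          cases' abs_le.1 b2 with b2a b2b
          linarith
        have hdecomp : (w + v) - yq n = v + (1 - tq n) • (w - yplus) := by
          rw [hyq]; simp only; module
        have hinner1 : ⟪ω' (yq n), (w + v) - yq n⟫
            = ⟪ω' (yq n), v⟫ + (1 - tq n) * ⟪ω' (yq n), w - yplus⟫ := by
          rw [hdecomp, inner_add_right, real_inner_smul_right]
        have hge : ⟪s, w - yplus⟫ ≤ ⟪ω' (yq n), w - yplus⟫ := (hq n).2.2.1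
        have h1t : 0 ≤ 1 - tq n := by linarith [htq1 n]
        have hmul : (1 - tq n) * ⟪s, w - yplus⟫ ≤ (1 - tq n) * ⟪ω' (yq n), w - yplus⟫ :=
          mul_le_mul_of_nonneg_left hge h1t
        have habs : -( |⟪s, w - yplus⟫| ) ≤ (1 - tq n) * ⟪s, w - yplus⟫ := by
          have h1t1 : 1 - tq n ≤ 1 := by linarith [htq0 n]
          have := neg_abs_le (⟪s, w - yplus⟫)
          nlinarith [abs_nonneg (⟪s, w - yplus⟫), neg_abs_le (⟪s, w - yplus⟫)]
        have := haqinner n v hvV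
        rw [hM']
        nlinarith
      by_cases hz : aq n = 0
      · rw [hz]
        simp
        positivity
      · have hnz : 0 < ‖aq n‖ := norm_pos_iff.2 hz
        have hv : ((ε/2) * ‖aq n‖⁻¹) • aq n ∈ V := Submodule.smul_mem _ _ (haqV n)
        have hvn : ‖((ε/2) * ‖aq n‖⁻¹) • aq n‖ < ε := by
          rw [norm_smul, Real.norm_eq_abs, abs_of_nonneg (by positivity)]
          rw [mul_assoc, inv_mul_cancel₀ hnz.ne', mul_one]
          linarith
        have hb := hbnd _ hv hvn
        rw [real_inner_smul_right, real_inner_self_eq_norm_sq] at hb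
        have he : ε / 2 * ‖aq n‖⁻¹ * ‖aq n‖ ^ 2 = (ε/2) * ‖aq n‖ := by
          field_simp
        rw [he] at hb
        have : ‖aq n‖ ≤ 2 * M' / ε := by
          rw [le_div_iff₀ hε]
          nlinarith
        linarith
    -- extract convergent subsequence
    have hmem : ∀ n, aq n ∈ Metric.closedBall (0:E) (2 * M' / ε + 1) := by
      intro n
      rw [Metric.mem_closedBall, dist_zero_right]
      exact haqbound n
    obtain ⟨ζ, hζmem, ψ, hψmono, hψtend⟩ :=
      (isCompact_closedBall (0:E) (2 * M' / ε + 1)).tendsto_subseq hmem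
    -- limits
    have hyqlim : Filter.Tendsto (fun n => yq (ψ n)) Filter.atTop (nhds yplus) := by
      have h1 : Filter.Tendsto (fun n => tq (ψ n)) Filter.atTop (nhds 0) :=
        htqlim.comp hψmono.tendsto_atTop
      have h2 : Filter.Tendsto (fun n => yplus + tq (ψ n) • (w - yplus))
          Filter.atTop (nhds (yplus + (0:ℝ) • (w - yplus))) :=
        Filter.Tendsto.add tendsto_const_nhds (h1.smul tendsto_const_nhds)
      simpa using h2
    rw [hYo]
    refine ⟨hyplusY, ζ, fun z hz => ?_⟩
    have hzA : z ∈ affineSpan ℝ Y := subset_affineSpan ℝ Y hz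
    have hineq : ∀ n, ω yplus + tq (ψ n) * ⟪s, w - yplus⟫ + ⟪aq (ψ n), z - yq (ψ n)⟫ ≤ ω z := by
      intro n
      have hsub := hω'sub (yq (ψ n)) (hq (ψ n)).2.1 z hz
      have hzin : z - yq (ψ n) ∈ V := by
        refine AffineSubspace.vsub_mem_direction hzA ?_
        exact subset_affineSpan ℝ Y (hUsub (hq (ψ n)).1)
      have he := haqinner (ψ n) _ hzin
      have h4 := (hq (ψ n)).2.2.2
      rw [← he]
      linarith
    have hlim : Filter.Tendsto
        (fun n => ω yplus + tq (ψ n) * ⟪s, w - yplus⟫ + ⟪aq (ψ n), z - yq (ψ n)⟫)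
        Filter.atTop (nhds (ω yplus + 0 * ⟪s, w - yplus⟫ + ⟪ζ, z - yplus⟫)) := by
      have h1 : Filter.Tendsto (fun n => tq (ψ n)) Filter.atTop (nhds 0) :=
        htqlim.comp hψmono.tendsto_atTop
      refine Filter.Tendsto.add (Filter.Tendsto.add tendsto_const_nhds ?_) ?_
      · exact h1.mul tendsto_const_nhds
      · exact Filter.Tendsto.inner hψtend (Filter.Tendsto.sub tendsto_const_nhds hyqlim)
    have := le_of_tendsto hlim (Filter.Eventually.of_forall hineq)
    simpa using this
  ------------------------------------------------------------------
  -- optimality condition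
  have hopt : ∀ u ∈ U, ⟪s, u - yplus⟫ ≤ ⟪ω' yplus, u - yplus⟫ := by
    intro u huU
    have huY : u ∈ Y := hUsub huU
    have hstep : ∀ θ : ℝ, 0 < θ → θ ≤ 1 →
        ⟪s, (u + θ • (w - u)) - yplus⟫ ≤ ⟪ω' yplus, (u + θ • (w - u)) - yplus⟫ := by
      intro θ hθ0 hθ1
      set q : E := u + θ • (w - u) with hqdef
      have hqU : q ∈ U := by
        have hcomb := hUcv huU hwU (by linarith : (0:ℝ) ≤ 1 - θ) hθ0.le (by ring)
        have he : (1 - θ) • u + θ • w = q := by rw [hqdef]; module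
        rwa [he] at hcomb
      have hqchar := seg_char hYcv huY hwY hwchar hθ0 hθ1
      have hq := fun n => hseg q hqU (θ * ε) (mul_pos hθ0 hε) hqchar (tq n) (htq0 n) (htq1 n)
      set yq : ℕ → E := fun n => yplus + tq n • (q - yplus) with hyq
      have hyqlim : Filter.Tendsto yq Filter.atTop (nhds yplus) := by
        have h2 : Filter.Tendsto (fun n => yplus + tq n • (q - yplus))
            Filter.atTop (nhds (yplus + (0:ℝ) • (q - yplus))) :=
          Filter.Tendsto.add tendsto_const_nhds (htqlim.smul tendsto_const_nhds)
        simpa using h2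
      have hyqYo : ∀ n, yq n ∈ Yo := fun n => (hq n).2.1
      have hωlim : Filter.Tendsto (fun n => ω' (yq n)) Filter.atTop (nhds (ω' yplus)) := by
        have hwithin : Filter.Tendsto yq Filter.atTop (nhdsWithin yplus Yo) := by
          rw [tendsto_nhdsWithin_iff]
          exact ⟨hyqlim, Filter.Eventually.of_forall hyqYo⟩
        exact ((hω'cont yplus hpYo).tendsto).comp hwithin
      have hlim2 : Filter.Tendsto (fun n => ⟪ω' (yq n), q - yplus⟫)
          Filter.atTop (nhds (⟪ω' yplus, q - yplus⟫)) :=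
        Filter.Tendsto.inner hωlim tendsto_const_nhds
      exact ge_of_tendsto hlim2 (Filter.Eventually.of_forall fun n => (hq n).2.2.1)
    -- θ → 0
    have hexp : ∀ θ : ℝ, 0 < θ → θ ≤ 1 →
        0 ≤ (⟪ω' yplus, u - yplus⟫ - ⟪s, u - yplus⟫)
          + θ * (⟪ω' yplus, w - u⟫ - ⟪s, w - u⟫) := by
      intro θ hθ0 hθ1
      have h1 := hstep θ hθ0 hθ1
      have he : ∀ ξ : E, ⟪ξ, (u + θ • (w - u)) - yplus⟫
          = ⟪ξ, u - yplus⟫ + θ * ⟪ξ, w - u⟫ := by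
        intro ξ
        have : (u + θ • (w - u)) - yplus = (u - yplus) + θ • (w - u) := by abel
        rw [this, inner_add_right, real_inner_smul_right]
      rw [he s, he (ω' yplus)] at h1
      linarith
    have := eps_trick hexp
    linarith
  ------------------------------------------------------------------
  -- final assembly
  refine ⟨hA, fun u huU => ?_⟩
  have hABY : ∀ m : ℕ, (yhat + tq m • (w - yhat)) ∈ Y ∧ (yplus + tq m • (w - yplus)) ∈ Y := by
    intro m
    constructor
    · have hcomb := hYcv hyhatY hwY (by linarith [htq1 m] : (0:ℝ) ≤ 1 - tq m)
        (htq0 m).le (by ring)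
      have he : (1 - tq m) • yhat + tq m • w = yhat + tq m • (w - yhat) := by module
      rwa [he] at hcomb
    · have hcomb := hYcv hyplusY hwY (by linarith [htq1 m] : (0:ℝ) ≤ 1 - tq m)
        (htq0 m).le (by ring)
      have he : (1 - tq m) • yplus + tq m • w = yplus + tq m • (w - yplus) := by module
      rwa [he] at hcomb
  have hVineq : nrm (yhat - yplus) ^ 2 / 2 ≤ ω yplus - ω yhat - ⟪s, yplus - yhat⟫ := by
    set Aq : ℕ → E := fun m => yhat + tq m • (w - yhat) with hAq
    set Bq : ℕ → E := fun m => yplus + tq m • (w - yplus) with hBq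
    have hsegYo : ∀ m : ℕ, ∀ r : ℝ, 0 ≤ r → r ≤ 1 → Aq m + r • (Bq m - Aq m) ∈ Yo := by
      intro m r hr0 hr1
      set xr : E := yhat + r • (yplus - yhat) with hxr
      have hxrY : xr ∈ Y := by
        have hcomb := hYcv hyhatY hyplusY (by linarith : (0:ℝ) ≤ 1 - r) hr0 (by ring)
        have he : (1 - r) • yhat + r • yplus = xr := by rw [hxr]; module
        rwa [he] at hcomb
      have heq : Aq m + r • (Bq m - Aq m) = xr + tq m • (w - xr) := by
        rw [hAq, hBq, hxr]; simp only; module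
      have hptY : xr + tq m • (w - xr) ∈ Y := by
        have hcomb := hYcv hxrY hwY (by linarith [htq1 m] : (0:ℝ) ≤ 1 - tq m)
          (htq0 m).le (by ring)
        have he : (1 - tq m) • xr + tq m • w = xr + tq m • (w - xr) := by module
        rwa [he] at hcomb
      have hchar := seg_char hYcv hxrY hwY hwchar (htq0 m) (htq1 m)
      obtain ⟨σ, hσ⟩ := subgrad_exists hYcv hωcont hωconv hptY
        (mul_pos (htq0 m) hε) hchar
      rw [heq, hYo]
      exact ⟨hptY, σ, hσ⟩
    have hhalf_m := fun m : ℕ =>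
      bregman_half hYoY nrm hnrm_smul hω'sub hstrong (hsegYo m)
    have hAqYo : ∀ m, Aq m ∈ Yo := by
      intro m
      have := hsegYo m 0 le_rfl zero_le_one
      simpa using this
    have hdiffval : ∀ m, Bq m - Aq m = (1 - tq m) • (yplus - yhat) := by
      intro m
      rw [hAq, hBq]; simp only; module
    have hnrmval : ∀ m, nrm (Bq m - Aq m) = (1 - tq m) * nrm (yplus - yhat) := by
      intro m
      rw [hdiffval m, hnrm_smul, abs_of_nonneg (by linarith [htq1 m] : (0:ℝ) ≤ 1 - tq m)]
    -- limits
    have htql : Filter.Tendsto tq Filter.atTop (nhds 0) := htqlim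
    have hAlim : Filter.Tendsto Aq Filter.atTop (nhds yhat) := by
      have h2 : Filter.Tendsto (fun m => yhat + tq m • (w - yhat))
          Filter.atTop (nhds (yhat + (0:ℝ) • (w - yhat))) :=
        Filter.Tendsto.add tendsto_const_nhds (htql.smul tendsto_const_nhds)
      simpa [hAq] using h2
    have hBlim : Filter.Tendsto Bq Filter.atTop (nhds yplus) := by
      have h2 : Filter.Tendsto (fun m => yplus + tq m • (w - yplus))
          Filter.atTop (nhds (yplus + (0:ℝ) • (w - yplus))) :=
        Filter.Tendsto.add tendsto_const_nhds (htql.smul tendsto_const_nhds)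
      simpa [hBq] using h2
    have hωA : Filter.Tendsto (fun m => ω (Aq m)) Filter.atTop (nhds (ω yhat)) := by
      refine ((hωcont yhat hyhatY).tendsto).comp ?_
      rw [tendsto_nhdsWithin_iff]
      exact ⟨hAlim, Filter.Eventually.of_forall fun m => (hABY m).1⟩
    have hωB : Filter.Tendsto (fun m => ω (Bq m)) Filter.atTop (nhds (ω yplus)) := by
      refine ((hωcont yplus hyplusY).tendsto).comp ?_
      rw [tendsto_nhdsWithin_iff]
      exact ⟨hBlim, Filter.Eventually.of_forall fun m => (hABY m).2⟩
    have hω'A : Filter.Tendsto (fun m => ω' (Aq m)) Filter.atTop (nhds s) := by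
      refine ((hω'cont yhat hyhat).tendsto).comp ?_
      rw [tendsto_nhdsWithin_iff]
      exact ⟨hAlim, Filter.Eventually.of_forall hAqYo⟩
    have hLHSlim : Filter.Tendsto (fun m => nrm (Bq m - Aq m) ^ 2 / 2)
        Filter.atTop (nhds (nrm (yplus - yhat) ^ 2 / 2)) := by
      have h1 : Filter.Tendsto (fun m => (1 - tq m) * nrm (yplus - yhat))
          Filter.atTop (nhds ((1 - 0) * nrm (yplus - yhat))) :=
        Filter.Tendsto.mul (Filter.Tendsto.sub tendsto_const_nhds htql) tendsto_const_nhds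
      have h2 : Filter.Tendsto (fun m => ((1 - tq m) * nrm (yplus - yhat)) ^ 2 / 2)
          Filter.atTop (nhds (((1 - 0) * nrm (yplus - yhat)) ^ 2 / 2)) :=
        Filter.Tendsto.div_const (Filter.Tendsto.pow h1 2) 2
      have h3 : (fun m => ((1 - tq m) * nrm (yplus - yhat)) ^ 2 / 2)
          = fun m => nrm (Bq m - Aq m) ^ 2 / 2 := by
        funext m
        rw [hnrmval m]
      rw [h3] at h2
      simpa using h2
    have hRHSlim : Filter.Tendsto
        (fun m => ω (Bq m) - ω (Aq m) - ⟪ω' (Aq m), Bq m - Aq m⟫)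
        Filter.atTop (nhds (ω yplus - ω yhat - ⟪s, yplus - yhat⟫)) := by
      refine Filter.Tendsto.sub (Filter.Tendsto.sub hωB hωA) ?_
      exact Filter.Tendsto.inner hω'A (Filter.Tendsto.sub hBlim hAlim)
    have hfin := le_of_tendsto_of_tendsto' hLHSlim hRHSlim hhalf_m
    have hnegnrm : nrm (yhat - yplus) = nrm (yplus - yhat) := by
      have h5 := hnrm_smul (-1) (yplus - yhat)
      simp only [neg_smul, one_smul, neg_sub, abs_neg, abs_one, one_mul] at h5
      rw [h5]
    rw [hnegnrm]
    exact hfin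
  have hquad : ℓ^2 / L^2 ≤ nrm (yhat - yplus) ^ 2 := by
    have h1 : (ℓ/L)^2 ≤ nrm (yhat - yplus) ^ 2 := by
      have := pow_le_pow_left₀ (by positivity : (0:ℝ) ≤ ℓ/L) hA 2
      exact this
    rw [div_pow] at h1
    exact h1
  have hhalf : ℓ^2 / (2 * L^2) ≤ ℓ^2 / L^2 := by
    apply div_le_div_of_nonneg_left (by positivity) (by positivity)
    nlinarith
  have hopt_u := hopt u huU
  have hsplit : ⟪s, u - yhat⟫ = ⟪s, u - yplus⟫ + ⟪s, yplus - yhat⟫ := by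
    rw [← inner_add_right]; congr 1; abel
  have hring : ℓ^2 / (2 * L^2) = (ℓ^2 / L^2) / 2 := by
    field_simp
  rw [hsplit]
  linarith
end
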